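/- arXiv:2409.14404 — 11 statements merged into one kernel-verified Lean document; each statement's English description precedes it below -/
import Mathlib

section
/- Let n ≥ 2 be an integer, b > 1, and let ψ : [1,b] → ℝ be differentiable. If there is a constant θ̂ ∈ (0,π) such that θ_ψ(x) = θ̂ for all x ∈ [1,b], then for every integer k with 1 ≤ k ≤ n−1 and every x ∈ [1,b] one has Re((ψ(x)+ix)^k) − cot(θ̂)·Im((ψ(x)+ix)^k) > 0. -/
/-- `arccot λ := π/2 − arctan λ ∈ (0, π)`. -/
noncomputable def arccot (x : ℝ) : ℝ := Real.pi / 2 - Real.arctan x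

/-- If the Lagrangian phase `θ_ψ ≡ θ̂ ∈ (0,π)` on `[1,b]`, then
`Re((ψ+ix)^k) − cot(θ̂)·Im((ψ+ix)^k) > 0` for all `1 ≤ k ≤ n−1` and `x ∈ [1,b]`. -/
theorem stmt1 (n : ℕ) (hn : 2 ≤ n) (b : ℝ) (hb : 1 < b)
    (ψ ψ' : ℝ → ℝ)
    (hderiv : ∀ x ∈ Set.Icc (1:ℝ) b, HasDerivAt ψ (ψ' x) x)
    (θhat : ℝ) (hθ0 : 0 < θhat) (hθπ : θhat < Real.pi)
    (hθ : ∀ x ∈ Set.Icc (1:ℝ) b,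
      arccot (ψ' x) + ((n - 1 : ℕ) : ℝ) * arccot (ψ x / x) = θhat) :
    ∀ k : ℕ, 1 ≤ k → k ≤ n - 1 → ∀ x ∈ Set.Icc (1:ℝ) b,
      0 < ((((ψ x : ℝ) : ℂ) + (x : ℂ) * Complex.I) ^ k).re
            - Real.cot θhat * ((((ψ x : ℝ) : ℂ) + (x : ℂ) * Complex.I) ^ k).im := by
  intro k hk1 hk2 x hx
  obtain ⟨hx1, hxb⟩ := hx
  have hx0 : (0:ℝ) < x := lt_of_lt_of_le one_pos hx1
  set t : ℝ := ψ x / x with ht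
  set α : ℝ := arccot t with hα
  have hα0 : 0 < α := by
    have := Real.arctan_lt_pi_div_two t
    simp only [hα, arccot]; linarith
  have hαπ : α < Real.pi := by
    have := Real.neg_pi_div_two_lt_arctan t
    have hπ : 0 < Real.pi := Real.pi_pos
    simp only [hα, arccot]; linarith
  -- phase constraint
  have hph := hθ x ⟨hx1, hxb⟩
  have hac0 : 0 < arccot (ψ' x) := by
    have := Real.arctan_lt_pi_div_two (ψ' x)
    simp only [arccot]; linarith
  have hn1 : (1:ℝ) ≤ ((n-1:ℕ):ℝ) := by
    have : 1 ≤ n - 1 := by omega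
    exact_mod_cast this
  have hkn : (k:ℝ) ≤ ((n-1:ℕ):ℝ) := by exact_mod_cast hk2
  have hk1' : (1:ℝ) ≤ (k:ℝ) := by exact_mod_cast hk1
  have hkα_pos : 0 < (k:ℝ) * α := by nlinarith
  have hkα_lt : (k:ℝ) * α < θhat := by nlinarith
  -- geometry
  set S : ℝ := ψ x ^ 2 + x ^ 2 with hS
  have hS0 : 0 < S := by nlinarith
  set r : ℝ := Real.sqrt S with hr
  have hr0 : 0 < r := Real.sqrt_pos.mpr hS0
  have hsqrt : Real.sqrt (1 + t ^ 2) = r / x := by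
    rw [show (1:ℝ) + t ^ 2 = S / x ^ 2 by field_simp [ht, hS]; rw [ht, hS, div_pow, add_mul, one_mul, div_mul_cancel₀ _ (by positivity), add_comm]]
    rw [Real.sqrt_div hS0.le, Real.sqrt_sq hx0.le]
  have hcos : r * Real.cos α = ψ x := by
    have : Real.cos α = Real.sin (Real.arctan t) := by
      rw [hα]; simpa [arccot] using Real.cos_pi_div_two_sub (Real.arctan t)
    rw [this, Real.sin_arctan, hsqrt]
    field_simp [ht]
    rw [ht, div_mul_cancel₀ _ hx0.ne']
  have hsin : r * Real.sin α = x := by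
    have : Real.sin α = Real.cos (Real.arctan t) := by
      rw [hα]; simpa [arccot] using Real.sin_pi_div_two_sub (Real.arctan t)
    rw [this, Real.cos_arctan, hsqrt]
    field_simp
  have hz : ((ψ x : ℂ) + (x:ℂ) * Complex.I) = (r:ℂ) * Complex.exp ((α:ℂ) * Complex.I) := by
    apply Complex.ext <;>
      simp [Complex.exp_ofReal_mul_I_re, Complex.exp_ofReal_mul_I_im, hcos, hsin]
  have hzk : ((ψ x : ℂ) + (x:ℂ) * Complex.I) ^ k
      = ((r ^ k : ℝ) : ℂ) * Complex.exp ((((k:ℝ) * α : ℝ) : ℂ) * Complex.I) := by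
    rw [hz, mul_pow, ← Complex.exp_nat_mul]
    push_cast
    ring_nf
  have hre : (((ψ x : ℂ) + (x:ℂ) * Complex.I) ^ k).re = r ^ k * Real.cos ((k:ℝ) * α) := by
    rw [hzk, Complex.re_ofReal_mul, Complex.exp_ofReal_mul_I_re]
  have him : (((ψ x : ℂ) + (x:ℂ) * Complex.I) ^ k).im = r ^ k * Real.sin ((k:ℝ) * α) := by
    rw [hzk, Complex.im_ofReal_mul, Complex.exp_ofReal_mul_I_im]
  rw [hre, him]
  have hsinθ : 0 < Real.sin θhat := Real.sin_pos_of_pos_of_lt_pi hθ0 hθπ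
  have key : r ^ k * Real.cos ((k:ℝ) * α) - Real.cot θhat * (r ^ k * Real.sin ((k:ℝ) * α))
      = r ^ k * (Real.sin (θhat - (k:ℝ) * α) / Real.sin θhat) := by
    rw [Real.sin_sub, Real.cot_eq_cos_div_sin]
    field_simp
  rw [key]
  have h1 : 0 < Real.sin (θhat - (k:ℝ) * α) :=
    Real.sin_pos_of_pos_of_lt_pi (by linarith) (by linarith)
  positivity
end

section
/- Let b > 1 and p, q > 0 be real numbers with 3(p²b − q²) > b³ − 1. Define c_q := (p³ − 3pb² − q³ + 3q)/(3p²b − b³ − 3q² + 1) (the denominator is positive by hypothesis). Then p > b(c_q + √(1 + c_q²)). Furthermore, if in addition p ≤ q, then also q > c_q + √(1 + c_q²). -/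
private lemma key_half (c t : ℝ) (ht : 0 < t) (h : 2 * t * c < t ^ 2 - 1) :
    c + Real.sqrt (1 + c ^ 2) < t := by
  have hc : c < t := by nlinarith
  have h2 : 1 + c ^ 2 < (t - c) ^ 2 := by nlinarith
  have h3 : Real.sqrt (1 + c ^ 2) < t - c := (Real.sqrt_lt' (by linarith)).mpr h2
  linarith

/-- On the blow-up of `CP³`, if `Im(α+iβ)³ > 0` and `p, q > 0`, then the stability
inequality `p > b(c_q + √(1+c_q²))` holds automatically; if moreover `p ≤ q`, then
also `q > c_q + √(1+c_q²)`. -/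
theorem stmt3 (b p q : ℝ) (hb : 1 < b) (hp : 0 < p) (hq : 0 < q)
    (him : b ^ 3 - 1 < 3 * (p ^ 2 * b - q ^ 2)) :
    b * ((p ^ 3 - 3 * p * b ^ 2 - q ^ 3 + 3 * q) / (3 * p ^ 2 * b - b ^ 3 - 3 * q ^ 2 + 1)
        + Real.sqrt (1 + ((p ^ 3 - 3 * p * b ^ 2 - q ^ 3 + 3 * q) /
            (3 * p ^ 2 * b - b ^ 3 - 3 * q ^ 2 + 1)) ^ 2)) < p ∧
    (p ≤ q →
      (p ^ 3 - 3 * p * b ^ 2 - q ^ 3 + 3 * q) / (3 * p ^ 2 * b - b ^ 3 - 3 * q ^ 2 + 1)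
        + Real.sqrt (1 + ((p ^ 3 - 3 * p * b ^ 2 - q ^ 3 + 3 * q) /
            (3 * p ^ 2 * b - b ^ 3 - 3 * q ^ 2 + 1)) ^ 2) < q) := by
  have hb0 : (0 : ℝ) < b := by linarith
  have hbne : b ≠ 0 := ne_of_gt hb0
  set N : ℝ := p ^ 3 - 3 * p * b ^ 2 - q ^ 3 + 3 * q with hN
  set D : ℝ := 3 * p ^ 2 * b - b ^ 3 - 3 * q ^ 2 + 1 with hD'
  have hD : 0 < D := by rw [hD']; nlinarith
  have hDne : D ≠ 0 := ne_of_gt hD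
  set c : ℝ := N / D with hc
  constructor
  · -- first part : t = p / b
    have hA : 0 < (p ^ 2 - b ^ 2) * D - 2 * p * b * N := by
      have hid : (p ^ 2 - b ^ 2) * D - 2 * p * b * N
          = (p - q) ^ 2 * (p ^ 2 + 2 * p * q + 3)
            + (b - 1) * ((p ^ 2 + b ^ 2) ^ 2 + b ^ 3 + b ^ 2 + 3 * b * q ^ 2
              + 3 * (q - p) ^ 2 + 2 * p * q ^ 3 + p ^ 2 * (2 * b - 1)) := by
        rw [hN, hD']; ring
      rw [hid]
      have h1 : 0 ≤ (p - q) ^ 2 * (p ^ 2 + 2 * p * q + 3) := by positivity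
      have h2 : 0 < (b - 1) * ((p ^ 2 + b ^ 2) ^ 2 + b ^ 3 + b ^ 2 + 3 * b * q ^ 2
          + 3 * (q - p) ^ 2 + 2 * p * q ^ 3 + p ^ 2 * (2 * b - 1)) := by
        apply mul_pos (by linarith)
        nlinarith [sq_nonneg (p ^ 2 + b ^ 2), sq_nonneg (q - p), sq_nonneg p,
          mul_nonneg (mul_nonneg hp.le hq.le) (mul_nonneg hq.le (mul_nonneg hq.le hq.le)),
          mul_pos hb0 (mul_pos hb0 hb0)]
      linarith
    have ht : 0 < p / b := div_pos hp hb0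
    have h2tc : 2 * (p / b) * c < (p / b) ^ 2 - 1 := by
      have key1 : 2 * p * N * b ^ 2 < (p ^ 2 - b ^ 2) * (b * D) := by
        nlinarith [mul_pos hb0 hA]
      have e1 : 2 * (p / b) * c = (2 * p * N) / (b * D) := by
        rw [hc]; field_simp
      have e2 : (p / b) ^ 2 - 1 = (p ^ 2 - b ^ 2) / b ^ 2 := by
        field_simp
      rw [e1, e2, div_lt_div_iff₀ (by positivity) (by positivity)]
      nlinarith [key1]
    have hk := key_half c (p / b) ht h2tc
    calc b * (c + Real.sqrt (1 + c ^ 2)) < b * (p / b) := (mul_lt_mul_iff_right₀ hb0).mpr hk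
      _ = p := by field_simp
  · intro hpq
    have hq2 : p ^ 2 ≤ q ^ 2 := by nlinarith
    have hbE : 0 < (b - 1) * (3 * p ^ 2 - b ^ 2 - b - 1) := by
      have hid : (b - 1) * (3 * p ^ 2 - b ^ 2 - b - 1) = D + 3 * (q ^ 2 - p ^ 2) := by
        rw [hD']; ring
      rw [hid]; linarith
    have hE : 0 < 3 * p ^ 2 - b ^ 2 - b - 1 := by
      rcases mul_pos_iff.mp hbE with ⟨h1, h2⟩ | ⟨h1, h2⟩
      · exact h2
      · linarith
    have hp1 : 1 < p := by nlinarith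
    have hq1 : 1 < q := lt_of_lt_of_le hp1 hpq
    have hB : 0 < (q ^ 2 - 1) * D - 2 * q * N := by
      have hid : (q ^ 2 - 1) * D - 2 * q * N
          = (q ^ 2 - 1) * D + (q - p) * (2 * q) * (p ^ 2 + p * q + q ^ 2 - 3)
            + 6 * p * q * (b ^ 2 - 1) := by
        rw [hN, hD']; ring
      rw [hid]
      have h1 : 0 < (q ^ 2 - 1) * D := mul_pos (by nlinarith) hD
      have h2 : 0 ≤ (q - p) * (2 * q) * (p ^ 2 + p * q + q ^ 2 - 3) := by
        apply mul_nonneg (mul_nonneg (by linarith) (by linarith))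
        nlinarith
      have h3 : 0 < 6 * p * q * (b ^ 2 - 1) := by
        apply mul_pos (by positivity); nlinarith
      linarith
    have h2tc : 2 * q * c < q ^ 2 - 1 := by
      rw [hc, show 2 * q * (N / D) = (2 * q * N) / D by ring, div_lt_iff₀ hD]
      linarith
    exact key_half c q hq h2tc
end

section
/- Let n ≥ 2 be an integer, b > 1, p ∈ ℝ, and let I ⊂ ℝ be an open interval such that Im((p+ib)^n) > Im((s+i)^n) for every s ∈ I. For s ∈ I set c_s := (Re((p+ib)^n) − Re((s+i)^n))/(Im((p+ib)^n) − Im((s+i)^n)). Let Ψ : I × [1,b] → ℝ be such that: (a) for each s ∈ I, Ψ(s,1) = s, Ψ(s,b) = p, the function x ↦ Ψ(s,x) is differentiable and its Lagrangian phase is constant equal to arccot(c_s), i.e. arccot(∂ₓΨ(s,x)) + (n−1)·arccot(Ψ(s,x)/x) = arccot(c_s) for all x ∈ [1,b]; (b) for each x ∈ [1,b], the function s ↦ Ψ(s,x) is differentiable; (c) for each s ∈ I, Re((s+i)^{n−1}) − c_s·Im((s+i)^{n−1}) > 0. Then for every x ∈ [1,b) the function s ↦ Ψ(s,x) is strictly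 increasing on I; in fact ∂Ψ/∂s(s,x) > 0 for all s ∈ I and x ∈ [1,b). -/
lemma sin_arccot_pos (t : ℝ) : 0 < Real.sin (arccot t) := by
  rw [arccot, Real.sin_pi_div_two_sub, Real.cos_arctan]; positivity

lemma cos_arccot (t : ℝ) : Real.cos (arccot t) = t * Real.sin (arccot t) := by
  rw [arccot, Real.cos_pi_div_two_sub, Real.sin_pi_div_two_sub, Real.sin_arctan, Real.cos_arctan]
  ring

lemma exp_arccot (t : ℝ) :
    Complex.exp (↑(arccot t) * Complex.I) = ↑(Real.sin (arccot t)) * ((t:ℂ) + Complex.I) := by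
  rw [Complex.exp_mul_I, ← Complex.ofReal_cos, ← Complex.ofReal_sin, cos_arccot]
  push_cast; ring

lemma re_polar (r θ : ℝ) : (↑r * Complex.exp (↑θ * Complex.I)).re = r * Real.cos θ := by
  rw [Complex.exp_mul_I, ← Complex.ofReal_cos, ← Complex.ofReal_sin]
  simp [Complex.cos_ofReal_re, Complex.sin_ofReal_re]

lemma im_polar (r θ : ℝ) : (↑r * Complex.exp (↑θ * Complex.I)).im = r * Real.sin θ := by
  rw [Complex.exp_mul_I, ← Complex.ofReal_cos, ← Complex.ofReal_sin]
  simp [Complex.cos_ofReal_re, Complex.sin_ofReal_re]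

lemma polar_W (ψ x : ℝ) (hx : 0 < x) :
    (ψ:ℂ) + ↑x * Complex.I
      = ↑(x / Real.sin (arccot (ψ/x))) * Complex.exp (↑(arccot (ψ/x)) * Complex.I) := by
  have hs := sin_arccot_pos (ψ/x)
  rw [exp_arccot]
  generalize Real.sin (arccot (ψ/x)) = σ at hs ⊢
  have hx0 : (x:ℂ) ≠ 0 := by exact_mod_cast hx.ne'
  have hσ0 : (σ:ℂ) ≠ 0 := by exact_mod_cast hs.ne'
  push_cast
  field_simp

lemma polar_t (t : ℝ) :
    (t:ℂ) + Complex.I = ↑(1 / Real.sin (arccot t)) * Complex.exp (↑(arccot t) * Complex.I) := by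
  have hs := sin_arccot_pos t
  rw [exp_arccot]
  generalize Real.sin (arccot t) = σ at hs ⊢
  have hσ0 : (σ:ℂ) ≠ 0 := by exact_mod_cast hs.ne'
  push_cast
  field_simp

lemma key_facts (m : ℕ) (c ψ ψ' x : ℝ) (hx : 0 < x)
    (hph : arccot ψ' + (m:ℝ) * arccot (ψ/x) = arccot c) :
    (((ψ':ℂ) + Complex.I) * (((ψ:ℂ) + ↑x*Complex.I))^m).re
      = c * ((((ψ':ℂ) + Complex.I) * (((ψ:ℂ) + ↑x*Complex.I))^m)).im ∧
    0 < ((((ψ':ℂ) + Complex.I) * (((ψ:ℂ) + ↑x*Complex.I))^m)).im ∧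
    0 < ((((ψ:ℂ) + ↑x*Complex.I))^m).re - c * ((((ψ:ℂ) + ↑x*Complex.I))^m).im := by
  have hs1 := sin_arccot_pos ψ'
  have hs2 := sin_arccot_pos (ψ/x)
  have hsγ := sin_arccot_pos c
  have hcγ := cos_arccot c
  have hW := polar_W ψ x hx
  have hψ'p := polar_t ψ'
  set θ₁ := arccot ψ' with hθ₁
  set θ₂ := arccot (ψ/x) with hθ₂
  set γ := arccot c with hγ

  have hWm : (((ψ:ℂ) + ↑x*Complex.I))^m
      = ↑((x / Real.sin θ₂)^m) * Complex.exp (↑((m:ℝ) * θ₂) * Complex.I) := by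
    rw [hW, mul_pow, ← Complex.exp_nat_mul, Complex.ofReal_pow]
    push_cast
    ring_nf
  have hu : (((ψ':ℂ) + Complex.I) * (((ψ:ℂ) + ↑x*Complex.I))^m)
      = ↑((x / Real.sin θ₂)^m / Real.sin θ₁) * Complex.exp (↑γ * Complex.I) := by
    rw [hWm, hψ'p, ← hph, mul_mul_mul_comm, ← Complex.exp_add]
    rw [Complex.ofReal_div, Complex.ofReal_div, Complex.ofReal_add, Complex.ofReal_mul]
    push_cast
    ring_nf
  have hR : 0 < (x / Real.sin θ₂)^m := by positivity
  have hρ : 0 < (x / Real.sin θ₂)^m / Real.sin θ₁ := by positivity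
  refine ⟨?_, ?_, ?_⟩
  · rw [hu, re_polar, im_polar, hcγ]; ring
  · rw [hu, im_polar]; exact mul_pos hρ hsγ
  · rw [hWm, re_polar, im_polar]
    have hmθ : (m:ℝ) * θ₂ = γ - θ₁ := by linarith
    rw [hmθ, Real.cos_sub, Real.sin_sub]
    have heq : (x / Real.sin θ₂)^m * (Real.cos γ * Real.cos θ₁ + Real.sin γ * Real.sin θ₁)
        - c * ((x / Real.sin θ₂)^m * (Real.sin γ * Real.cos θ₁ - Real.cos γ * Real.sin θ₁))
        = (x / Real.sin θ₂)^m * Real.sin γ * Real.sin θ₁ * (1 + c^2) := by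
      rw [hcγ]; ring
    rw [heq]; positivity

lemma xdir (n : ℕ) (hn : 2 ≤ n) (b c : ℝ) (hb : 1 < b) (f fx : ℝ → ℝ)
    (hdx : ∀ x ∈ Set.Icc (1:ℝ) b, HasDerivAt f (fx x) x)
    (hph : ∀ x ∈ Set.Icc (1:ℝ) b,
      arccot (fx x) + ((n-1 : ℕ):ℝ) * arccot (f x / x) = arccot c) :
    (∀ x ∈ Set.Icc (1:ℝ) b,
      (((f x :ℂ) + x*Complex.I)^n).re - c * (((f x :ℂ) + x*Complex.I)^n).im
        = (((f 1 :ℂ) + Complex.I)^n).re - c * (((f 1:ℂ) + Complex.I)^n).im) ∧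
    (∀ x ∈ Set.Icc (1:ℝ) b, ∀ y ∈ Set.Icc (1:ℝ) b, x < y →
      (((f x :ℂ) + x*Complex.I)^n).im < (((f y :ℂ) + y*Complex.I)^n).im) := by
  have hnpos : (0:ℝ) < n := by positivity
  set F : ℝ → ℂ := fun x => ((f x :ℂ) + x*Complex.I)^n with hF
  have hFd : ∀ x ∈ Set.Icc (1:ℝ) b, HasDerivAt F
      (((n:ℝ):ℂ) * (((fx x:ℂ) + Complex.I) * ((f x :ℂ) + x*Complex.I)^(n-1))) x := by
    intro x hx
    have h1 : HasDerivAt (fun x => (f x : ℂ)) ((fx x : ℝ):ℂ) x := (hdx x hx).ofReal_comp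
    have h2 : HasDerivAt (fun x:ℝ => (x:ℂ) * Complex.I) (1 * Complex.I) x :=
      ((hasDerivAt_id x).ofReal_comp).mul_const Complex.I
    have hW := h1.add h2
    have hp := HasDerivAt.scomp (𝕜 := ℝ) x
      (hasDerivAt_pow n ((f x :ℂ) + x*Complex.I)) hW
    have : F = (fun z : ℂ => z ^ n) ∘ (fun x : ℝ => (f x :ℂ) + x*Complex.I) := rfl
    change HasDerivAt F _ x at hp
    convert hp using 1
    simp only [smul_eq_mul]
    push_cast
    ring
  have hkf : ∀ x ∈ Set.Icc (1:ℝ) b,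
      ((((fx x:ℂ) + Complex.I) * (((f x:ℂ) + ↑x*Complex.I))^(n-1)).re
        = c * ((((fx x:ℂ) + Complex.I) * (((f x:ℂ) + ↑x*Complex.I))^(n-1))).im ∧
      0 < ((((fx x:ℂ) + Complex.I) * (((f x:ℂ) + ↑x*Complex.I))^(n-1))).im ∧
      0 < ((((f x:ℂ) + ↑x*Complex.I))^(n-1)).re
          - c * ((((f x:ℂ) + ↑x*Complex.I))^(n-1)).im) := fun x hx =>
    key_facts (n-1) c (f x) (fx x) x (by linarith [hx.1]) (hph x hx)
  have hGd : ∀ x ∈ Set.Icc (1:ℝ) b, HasDerivAt (fun x => (F x).re - c * (F x).im) 0 x := by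
    intro x hx
    have hre : HasDerivAt (fun x => (F x).re)
        ((((n:ℝ):ℂ) * (((fx x:ℂ) + Complex.I) * ((f x :ℂ) + x*Complex.I)^(n-1))).re) x :=
      Complex.reCLM.hasFDerivAt.comp_hasDerivAt x (hFd x hx)
    have him : HasDerivAt (fun x => (F x).im)
        ((((n:ℝ):ℂ) * (((fx x:ℂ) + Complex.I) * ((f x :ℂ) + x*Complex.I)^(n-1))).im) x :=
      Complex.imCLM.hasFDerivAt.comp_hasDerivAt x (hFd x hx)
    have h := hre.sub (him.const_mul c)
    refine h.congr_deriv ?_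
    rw [Complex.re_ofReal_mul, Complex.im_ofReal_mul, (hkf x hx).1]
    ring
  have hHd : ∀ x ∈ Set.Icc (1:ℝ) b, HasDerivAt (fun x => (F x).im)
      ((n:ℝ) * ((((fx x:ℂ) + Complex.I) * (((f x:ℂ) + ↑x*Complex.I))^(n-1))).im) x := by
    intro x hx
    have him : HasDerivAt (fun x => (F x).im)
        ((((n:ℝ):ℂ) * (((fx x:ℂ) + Complex.I) * ((f x :ℂ) + x*Complex.I)^(n-1))).im) x :=
      Complex.imCLM.hasFDerivAt.comp_hasDerivAt x (hFd x hx)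
    convert him using 1
    rw [Complex.im_ofReal_mul]
  constructor
  · intro x hx
    show (F x).re - c * (F x).im = (((f 1 :ℂ) + Complex.I)^n).re - c * (((f 1:ℂ) + Complex.I)^n).im
    have h1 : (((f 1 :ℂ) + Complex.I)^n).re - c * (((f 1:ℂ) + Complex.I)^n).im
        = (F 1).re - c * (F 1).im := by
      rw [hF]; norm_num
    rw [h1]
    rcases eq_or_lt_of_le hx.1 with h | h
    · rw [← h]
    · have hsub : Set.Icc (1:ℝ) x ⊆ Set.Icc 1 b := Set.Icc_subset_Icc le_rfl hx.2
      obtain ⟨ξ, hξ, hξ0⟩ := exists_hasDerivAt_eq_slope (fun x => (F x).re - c * (F x).im)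
        (fun _ => (0:ℝ)) h
        (fun t ht => ((hGd t (hsub ht)).continuousAt).continuousWithinAt)
        (fun t ht => hGd t (hsub (Set.mem_Icc.mpr ⟨ht.1.le, ht.2.le⟩)))
      rw [eq_comm, div_eq_zero_iff] at hξ0
      rcases hξ0 with h' | h'
      · linarith
      · linarith
  · intro x hx y hy hxy
    show (F x).im < (F y).im
    have hsub : Set.Icc x y ⊆ Set.Icc 1 b := Set.Icc_subset_Icc hx.1 hy.2
    obtain ⟨ξ, hξ, hξ0⟩ := exists_hasDerivAt_eq_slope (fun x => (F x).im)
      (fun t => (n:ℝ) * ((((fx t:ℂ) + Complex.I) * (((f t:ℂ) + ↑t*Complex.I))^(n-1))).im) hxy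
      (fun t ht => ((hHd t (hsub ht)).continuousAt).continuousWithinAt)
      (fun t ht => hHd t (hsub (Set.mem_Icc.mpr ⟨ht.1.le, ht.2.le⟩)))
    have hξI : ξ ∈ Set.Icc (1:ℝ) b := hsub (Set.mem_Icc.mpr ⟨hξ.1.le, hξ.2.le⟩)
    have hpos := mul_pos hnpos (hkf ξ hξI).2.1
    rw [hξ0] at hpos
    rcases div_pos_iff.mp hpos with ⟨h1, _⟩ | ⟨_, h2⟩
    · linarith
    · linarith

/-- Monotonicity in `s` of the family `Ψ(s,·)` of constant-phase (dHYM) solutions with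
`Ψ(s,1) = s`, `Ψ(s,b) = p`, under the stability condition
`Re((s+i)^{n−1}) − c_s·Im((s+i)^{n−1}) > 0`. -/
theorem stmt4 (n : ℕ) (hn : 2 ≤ n) (b p : ℝ) (hb : 1 < b)
    (a a' : ℝ) (I : Set ℝ) (hI : I = Set.Ioo a a')
    (him : ∀ s ∈ I, (((s : ℂ) + Complex.I) ^ n).im < (((p : ℂ) + (b : ℂ) * Complex.I) ^ n).im)
    (c : ℝ → ℝ)
    (hc : ∀ s ∈ I, c s =
      ((((p : ℂ) + (b : ℂ) * Complex.I) ^ n).re - (((s : ℂ) + Complex.I) ^ n).re) /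
      ((((p : ℂ) + (b : ℂ) * Complex.I) ^ n).im - (((s : ℂ) + Complex.I) ^ n).im))
    (Ψ Ψx Ψs : ℝ → ℝ → ℝ)
    (hbd1 : ∀ s ∈ I, Ψ s 1 = s) (hbd2 : ∀ s ∈ I, Ψ s b = p)
    (hdx : ∀ s ∈ I, ∀ x ∈ Set.Icc (1:ℝ) b, HasDerivAt (Ψ s) (Ψx s x) x)
    (hphase : ∀ s ∈ I, ∀ x ∈ Set.Icc (1:ℝ) b,
      arccot (Ψx s x) + ((n - 1 : ℕ) : ℝ) * arccot (Ψ s x / x) = arccot (c s))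
    (hds : ∀ x ∈ Set.Icc (1:ℝ) b, ∀ s ∈ I, HasDerivAt (fun s => Ψ s x) (Ψs s x) s)
    (hstab : ∀ s ∈ I,
      0 < (((s : ℂ) + Complex.I) ^ (n - 1)).re - c s * (((s : ℂ) + Complex.I) ^ (n - 1)).im) :
    ∀ x ∈ Set.Ico (1:ℝ) b,
      StrictMonoOn (fun s => Ψ s x) I ∧ ∀ s ∈ I, 0 < Ψs s x := by
  have hIopen : IsOpen I := hI ▸ isOpen_Ioo
  -- x-direction facts for each s ∈ I
  have hx1 : ∀ s ∈ I, (∀ x ∈ Set.Icc (1:ℝ) b,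
      (((Ψ s x :ℂ) + x*Complex.I)^n).re - c s * (((Ψ s x :ℂ) + x*Complex.I)^n).im
        = (((s :ℂ) + Complex.I)^n).re - c s * (((s:ℂ) + Complex.I)^n).im) ∧
    (∀ x ∈ Set.Icc (1:ℝ) b, ∀ y ∈ Set.Icc (1:ℝ) b, x < y →
      (((Ψ s x :ℂ) + x*Complex.I)^n).im < (((Ψ s y :ℂ) + y*Complex.I)^n).im) := by
    intro s hs
    have h := xdir n hn b (c s) hb (Ψ s) (Ψx s) (hdx s hs) (hphase s hs)
    rw [hbd1 s hs] at h
    exact h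
  -- positivity of Ψs
  have main : ∀ x ∈ Set.Ico (1:ℝ) b, ∀ s ∈ I, 0 < Ψs s x := by
    intro x hx s hs
    have hx1b : x ∈ Set.Icc (1:ℝ) b := ⟨hx.1, hx.2.le⟩
    have hxpos : (0:ℝ) < x := by linarith [hx.1]
    -- abbreviations
    set S : ℂ := (s:ℂ) + Complex.I with hS
    set W : ℂ := (Ψ s x : ℂ) + ↑x*Complex.I with hW
    set P : ℂ := (p:ℂ) + (b:ℂ)*Complex.I with hP
    -- key facts at (s,x)
    have hkf := key_facts (n-1) (c s) (Ψ s x) (Ψx s x) x hxpos (hphase s hs x hx1b)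
    have hA : 0 < (W^(n-1)).re - c s * (W^(n-1)).im := hkf.2.2
    have hB : 0 < (S^(n-1)).re - c s * (S^(n-1)).im := hstab s hs
    have hD : 0 < (P^n).im - (S^n).im := sub_pos.mpr (him s hs)
    -- Im monotonicity facts
    have hJle : (S^n).im ≤ (W^n).im := by
      rcases eq_or_lt_of_le hx.1 with h | h
      · have : W = S := by rw [hW, hS, ← h, hbd1 s hs]; norm_num
        rw [this]
      · have := (hx1 s hs).2 1 ⟨le_rfl, hb.le⟩ x hx1b h
        rw [hbd1 s hs] at this
        have h1 : ((s:ℂ) + (1:ℝ)*Complex.I) = S := by rw [hS]; norm_num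
        rw [h1] at this
        exact this.le
    have hJlt : (W^n).im < (P^n).im := by
      have := (hx1 s hs).2 x hx1b b ⟨hb.le, le_rfl⟩ hx.2
      rw [hbd2 s hs] at this
      exact this
    -- derivative of s ↦ ((σ:ℂ)+I)^n
    have hSd : ∀ σ : ℝ, HasDerivAt (fun σ:ℝ => ((σ:ℂ)+Complex.I)^n)
        (((n:ℝ):ℂ) * ((σ:ℂ)+Complex.I)^(n-1)) σ := by
      intro σ
      have h1 : HasDerivAt (fun σ:ℝ => ((σ:ℂ)+Complex.I)) ((1:ℝ):ℂ) σ :=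
        ((hasDerivAt_id σ).ofReal_comp).add_const Complex.I
      have hp := HasDerivAt.scomp (𝕜 := ℝ) σ (hasDerivAt_pow n ((σ:ℂ)+Complex.I)) h1
      refine hp.congr_deriv ?_
      simp [smul_eq_mul]
    -- derivative of s ↦ W_σ^n
    have hWd : HasDerivAt (fun σ:ℝ => ((Ψ σ x:ℂ)+↑x*Complex.I)^n)
        (((n * Ψs s x :ℝ):ℂ) * W^(n-1)) s := by
      have h1 : HasDerivAt (fun σ:ℝ => ((Ψ σ x:ℂ)+↑x*Complex.I)) ((Ψs s x :ℝ):ℂ) s :=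
        ((hds x hx1b s hs).ofReal_comp).add_const _
      have hp := HasDerivAt.scomp (𝕜 := ℝ) s (hasDerivAt_pow n ((Ψ s x:ℂ)+↑x*Complex.I)) h1
      refine hp.congr_deriv ?_
      simp only [smul_eq_mul]
      push_cast
      rw [hW]
      ring
    -- derivative of c near s
    set D : ℝ := (P^n).im - (S^n).im with hDdef
    set c' : ℝ := (-(((n:ℝ):ℂ) * S^(n-1)).re * D
        - ((P^n).re - (S^n).re) * (-(((n:ℝ):ℂ) * S^(n-1)).im)) / D^2 with hc'def
    have hcd : HasDerivAt c c' s := by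
      have hnum : HasDerivAt (fun σ:ℝ => (P^n).re - (((σ:ℂ)+Complex.I)^n).re)
          (-(((n:ℝ):ℂ) * S^(n-1)).re) s := by
        have := (Complex.reCLM.hasFDerivAt.comp_hasDerivAt s (hSd s)).const_sub ((P^n).re)
        exact this
      have hden : HasDerivAt (fun σ:ℝ => (P^n).im - (((σ:ℂ)+Complex.I)^n).im)
          (-(((n:ℝ):ℂ) * S^(n-1)).im) s := by
        have := (Complex.imCLM.hasFDerivAt.comp_hasDerivAt s (hSd s)).const_sub ((P^n).im)
        exact this
      have hd := hnum.div hden (by rw [← hS]; exact hD.ne')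
      have heq : c =ᶠ[nhds s] (fun σ:ℝ => ((P^n).re - (((σ:ℂ)+Complex.I)^n).re)
          / ((P^n).im - (((σ:ℂ)+Complex.I)^n).im)) := by
        filter_upwards [hIopen.mem_nhds hs] with σ hσ
        rw [hc σ hσ, hP]
      exact (hd.congr_of_eventuallyEq heq)
    -- the zero function g
    set g : ℝ → ℝ := fun σ => ((((Ψ σ x:ℂ)+↑x*Complex.I)^n).re
        - c σ * ((((Ψ σ x:ℂ)+↑x*Complex.I))^n).im)
        - ((((σ:ℂ)+Complex.I)^n).re - c σ * (((σ:ℂ)+Complex.I)^n).im) with hg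
    have hg0 : HasDerivAt g 0 s := by
      have heq : g =ᶠ[nhds s] (fun _ => (0:ℝ)) := by
        filter_upwards [hIopen.mem_nhds hs] with σ hσ
        have := (hx1 σ hσ).1 x hx1b
        rw [hg]
        simp only
        rw [this]
        ring
      exact (hasDerivAt_const s 0).congr_of_eventuallyEq heq
    -- compute the derivative of g
    have hgd : HasDerivAt g
        (((((n * Ψs s x :ℝ):ℂ) * W^(n-1)).re
          - (c' * (W^n).im + c s * ((((n * Ψs s x :ℝ):ℂ) * W^(n-1)).im)))
        - ((((n:ℝ):ℂ) * S^(n-1)).re - (c' * (S^n).im + c s * ((((n:ℝ):ℂ) * S^(n-1)).im)))) s := by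
      have hre1 : HasDerivAt (fun σ:ℝ => (((Ψ σ x:ℂ)+↑x*Complex.I)^n).re)
          ((((n * Ψs s x :ℝ):ℂ) * W^(n-1)).re) s :=
        Complex.reCLM.hasFDerivAt.comp_hasDerivAt s hWd
      have him1 : HasDerivAt (fun σ:ℝ => (((Ψ σ x:ℂ)+↑x*Complex.I)^n).im)
          ((((n * Ψs s x :ℝ):ℂ) * W^(n-1)).im) s :=
        Complex.imCLM.hasFDerivAt.comp_hasDerivAt s hWd
      have hre2 : HasDerivAt (fun σ:ℝ => (((σ:ℂ)+Complex.I)^n).re)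
          ((((n:ℝ):ℂ) * S^(n-1)).re) s :=
        Complex.reCLM.hasFDerivAt.comp_hasDerivAt s (hSd s)
      have him2 : HasDerivAt (fun σ:ℝ => (((σ:ℂ)+Complex.I)^n).im)
          ((((n:ℝ):ℂ) * S^(n-1)).im) s :=
        Complex.imCLM.hasFDerivAt.comp_hasDerivAt s (hSd s)
      have hm1 : HasDerivAt (fun σ:ℝ => c σ * (((Ψ σ x:ℂ)+↑x*Complex.I)^n).im)
          (c' * (W^n).im + c s * ((((n * Ψs s x :ℝ):ℂ) * W^(n-1)).im)) s := by
        have := hcd.mul him1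
        rw [← hW] at this
        exact this
      have hm2 : HasDerivAt (fun σ:ℝ => c σ * (((σ:ℂ)+Complex.I)^n).im)
          (c' * (S^n).im + c s * ((((n:ℝ):ℂ) * S^(n-1)).im)) s := by
        have := hcd.mul him2
        rw [← hS] at this
        exact this
      exact (hre1.sub hm1).sub (hre2.sub hm2)
    have hE := hg0.unique hgd
    -- simplify re/im of real-scalar multiples
    rw [Complex.re_ofReal_mul, Complex.im_ofReal_mul, Complex.re_ofReal_mul,
      Complex.im_ofReal_mul] at hE
    -- c' * D equation
    clear_value c'
    clear_value D
    have hKP : (P^n).re - (S^n).re = c s * D := by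
      rw [hDdef, hc s hs]
      exact (div_mul_cancel₀ _ (hDdef ▸ hD.ne')).symm
    have hc'D : c' * D = (n:ℝ) * (c s * (S^(n-1)).im - (S^(n-1)).re) := by
      rw [hc'def, hKP, Complex.re_ofReal_mul, Complex.im_ofReal_mul]
      field_simp
      ring
    -- final: n Ψs A D = n B (JP - JW)
    have hkey : (n:ℝ) * Ψs s x * ((W^(n-1)).re - c s * (W^(n-1)).im) * D
        = (n:ℝ) * ((S^(n-1)).re - c s * (S^(n-1)).im) * ((P^n).im - (W^n).im) := by
      have hDexp : (P^n).im - (W^n).im = D - ((W^n).im - (S^n).im) := by rw [hDdef]; ring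
      rw [hDexp]
      linear_combination (-D) * hE + ((W^n).im - (S^n).im) * hc'D
    have hnpos : (0:ℝ) < n := by positivity
    nlinarith [mul_pos (mul_pos hnpos hB) (sub_pos.mpr hJlt), mul_pos (mul_pos hnpos hA) hD,
      hkey]
  intro x hx
  have hx1b : x ∈ Set.Icc (1:ℝ) b := ⟨hx.1, hx.2.le⟩
  refine ⟨?_, main x hx⟩
  have hconv : Convex ℝ I := hI ▸ convex_Ioo a a'
  apply strictMonoOn_of_deriv_pos hconv
  · exact fun s hs => (hds x hx1b s hs).continuousAt.continuousWithinAt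
  · intro s hs
    rw [hIopen.interior_eq] at hs
    rw [(hds x hx1b s hs).deriv]
    exact main x hx s hs
end

section
/- Let b > 1, p > 0, and let s be a real number with 0 < s < p/b and 3(p²b − s²) > b³ − 1. Define c_s := (p³ − 3pb² − s³ + 3s)/(3p²b − b³ − 3s² + 1). Then p − b·c_s > 0 and p − b·c_s > s − c_s; in particular p − b·c_s > max(s − c_s, 0). -/
/-- For `0 < s < p/b` with `Im(α_s+iβ)³ > 0`, one has `p − b·c_s > 0` and
`p − b·c_s > s − c_s`, i.e. the class `α_s − c_s·β` is big on the blow-up of `CP³`. -/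
theorem stmt5 (b p s : ℝ) (hb : 1 < b) (hp : 0 < p)
    (hs0 : 0 < s) (hs1 : s < p / b)
    (him : b ^ 3 - 1 < 3 * (p ^ 2 * b - s ^ 2)) :
    0 < p - b * ((p ^ 3 - 3 * p * b ^ 2 - s ^ 3 + 3 * s) /
        (3 * p ^ 2 * b - b ^ 3 - 3 * s ^ 2 + 1)) ∧
    s - (p ^ 3 - 3 * p * b ^ 2 - s ^ 3 + 3 * s) /
        (3 * p ^ 2 * b - b ^ 3 - 3 * s ^ 2 + 1) <
      p - b * ((p ^ 3 - 3 * p * b ^ 2 - s ^ 3 + 3 * s) /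
        (3 * p ^ 2 * b - b ^ 3 - 3 * s ^ 2 + 1)) ∧
    max (s - (p ^ 3 - 3 * p * b ^ 2 - s ^ 3 + 3 * s) /
        (3 * p ^ 2 * b - b ^ 3 - 3 * s ^ 2 + 1)) 0 <
      p - b * ((p ^ 3 - 3 * p * b ^ 2 - s ^ 3 + 3 * s) /
        (3 * p ^ 2 * b - b ^ 3 - 3 * s ^ 2 + 1)) := by
  have hb0 : (0:ℝ) < b := lt_trans one_pos hb
  have hsb : s * b < p := (lt_div_iff₀ hb0).mp hs1
  have hD : 0 < 3 * p ^ 2 * b - b ^ 3 - 3 * s ^ 2 + 1 := by linarith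
  set N := p ^ 3 - 3 * p * b ^ 2 - s ^ 3 + 3 * s with hN
  set D := 3 * p ^ 2 * b - b ^ 3 - 3 * s ^ 2 + 1 with hDdef
  obtain ⟨v, hv, rfl⟩ : ∃ v, 0 < v ∧ b = v + 1 := ⟨b - 1, by linarith, by ring⟩
  obtain ⟨u, hu, rfl⟩ : ∃ u, 0 < u ∧ p = u + s * (v + 1) :=
    ⟨p - s * (v + 1), by linarith, by ring⟩
  have key1 : (v + 1) * N < (u + s * (v + 1)) * D := by
    have e : (u + s * (v + 1)) * D - (v + 1) * N =
        6*v*s + 6*v*s^3 + 12*v^2*s + 12*v^2*s^3 + 8*v^3*s + 8*v^3*s^3 + 2*v^4*s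
        + 2*v^4*s^3 + 3*u + 3*u*s^2 + 6*u*v + 18*u*v*s^2 + 6*u*v^2 + 18*u*v^2*s^2
        + 2*u*v^3 + 6*u*v^3*s^2 + 6*u^2*s + 12*u^2*v*s + 6*u^2*v^2*s + 2*u^3
        + 2*u^3*v := by rw [hN, hDdef]; ring
    nlinarith [e, show (0:ℝ) < 6*v*s + 6*v*s^3 + 12*v^2*s + 12*v^2*s^3 + 8*v^3*s + 8*v^3*s^3 + 2*v^4*s
        + 2*v^4*s^3 + 3*u + 3*u*s^2 + 6*u*v + 18*u*v*s^2 + 6*u*v^2 + 18*u*v^2*s^2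
        + 2*u*v^3 + 6*u*v^3*s^2 + 6*u^2*s + 12*u^2*v*s + 6*u^2*v^2*s + 2*u^3
        + 2*u^3*v from by positivity]
  have key2 : ((v + 1) - 1) * N < ((u + s * (v + 1)) - s) * D := by
    have e : ((u + s * (v + 1)) - s) * D - ((v + 1) - 1) * N =
        6*v^2*s + 6*v^2*s^3 + 6*v^3*s + 6*v^3*s^3 + 2*v^4*s + 2*v^4*s^3
        + 12*u*v*s^2 + 3*u*v^2 + 15*u*v^2*s^2 + 2*u*v^3 + 6*u*v^3*s^2
        + 6*u^2*s + 12*u^2*v*s + 6*u^2*v^2*s + 3*u^3 + 2*u^3*v := by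
      rw [hN, hDdef]; ring
    nlinarith [e, show (0:ℝ) < 6*v^2*s + 6*v^2*s^3 + 6*v^3*s + 6*v^3*s^3 + 2*v^4*s + 2*v^4*s^3
        + 12*u*v*s^2 + 3*u*v^2 + 15*u*v^2*s^2 + 2*u*v^3 + 6*u*v^3*s^2
        + 6*u^2*s + 12*u^2*v*s + 6*u^2*v^2*s + 3*u^3 + 2*u^3*v from by positivity]
  have h1 : 0 < (u + s * (v + 1)) - (v + 1) * (N / D) := by
    have : (v + 1) * (N / D) < u + s * (v + 1) := by
      rw [mul_div_assoc', div_lt_iff₀ hD]; linarith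
    linarith
  have h2 : s - N / D < (u + s * (v + 1)) - (v + 1) * (N / D) := by
    have h : ((v + 1) - 1) * (N / D) < (u + s * (v + 1)) - s := by
      rw [mul_div_assoc', div_lt_iff₀ hD]; linarith
    have e : ((v + 1) - 1) * (N / D) = (v + 1) * (N / D) - N / D := by ring
    linarith [e ▸ h]
  exact ⟨h1, h2, max_lt h2 h1⟩
end

section
/- Let b > 1, p > 0, and let s be a real number with p/b ≤ s ≤ p and 3(p²b − s²) > b³ − 1. Define F(s) := −s⁴ + s²(3p²b − b³ − 2) − 2sp(p² − 3b²) − (3p²b − b³ + 1) and c_s := (p³ − 3pb² − s³ + 3s)/(3p²b − b³ − 3s² + 1). Then F(s) > 0, and consequently s > c_s + √(c_s² + 1). -/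
/-- For `p/b ≤ s ≤ p` with `Im(α_s+iβ)³ > 0`, the quartic `F` is positive at `s`, and
consequently `s > c_s + √(c_s² + 1)` (dHYM stability on `[p/b, p]`). -/
theorem stmt6 (b p s : ℝ) (hb : 1 < b) (hp : 0 < p)
    (hs1 : p / b ≤ s) (hs2 : s ≤ p)
    (him : b ^ 3 - 1 < 3 * (p ^ 2 * b - s ^ 2)) :
    0 < -s ^ 4 + s ^ 2 * (3 * p ^ 2 * b - b ^ 3 - 2) - 2 * s * p * (p ^ 2 - 3 * b ^ 2)
          - (3 * p ^ 2 * b - b ^ 3 + 1) ∧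
    (p ^ 3 - 3 * p * b ^ 2 - s ^ 3 + 3 * s) / (3 * p ^ 2 * b - b ^ 3 - 3 * s ^ 2 + 1)
        + Real.sqrt (((p ^ 3 - 3 * p * b ^ 2 - s ^ 3 + 3 * s) /
            (3 * p ^ 2 * b - b ^ 3 - 3 * s ^ 2 + 1)) ^ 2 + 1) < s := by
  have hb0 : 0 < b := by linarith
  have hsb : p ≤ s * b := by
    have := (div_le_iff₀ hb0).mp hs1; linarith
  have hs0 : 0 < s := lt_of_lt_of_le (div_pos hp hb0) hs1
  have hF : 0 < -s ^ 4 + s ^ 2 * (3 * p ^ 2 * b - b ^ 3 - 2) - 2 * s * p * (p ^ 2 - 3 * b ^ 2)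
          - (3 * p ^ 2 * b - b ^ 3 + 1) := by
    nlinarith [mul_pos hs0 hs0, sq_nonneg (s*b-p), sq_nonneg (p-s),
      mul_nonneg (sub_nonneg.2 hsb) (sub_nonneg.2 hs2), mul_pos hp hs0, sq_nonneg (s-1),
      sq_nonneg (b-1), mul_nonneg (mul_nonneg (sub_nonneg.2 hsb) (sub_nonneg.2 hs2)) hs0.le,
      mul_nonneg (sub_nonneg.2 hsb) hs0.le, mul_nonneg (sub_nonneg.2 hs2) hs0.le]
  refine ⟨hF, ?_⟩
  set D : ℝ := 3 * p ^ 2 * b - b ^ 3 - 3 * s ^ 2 + 1 with hDdef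
  have hD : 0 < D := by simp only [hDdef]; linarith
  set c : ℝ := (p ^ 3 - 3 * p * b ^ 2 - s ^ 3 + 3 * s) / D with hcdef
  have hkey : 0 < s ^ 2 - 1 - 2 * s * c := by
    have hc : c * D = p ^ 3 - 3 * p * b ^ 2 - s ^ 3 + 3 * s := by
      rw [hcdef]; field_simp
    have h2 : 0 < (s ^ 2 - 1 - 2 * s * c) * D := by nlinarith
    by_contra hcon; push_neg at hcon; nlinarith
  have hsc : 0 < s - c := by nlinarith [mul_pos hs0 hs0]
  have hlt : Real.sqrt (c ^ 2 + 1) < s - c := by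
    rw [show s - c = Real.sqrt ((s-c)^2) from (Real.sqrt_sq hsc.le).symm]
    apply Real.sqrt_lt_sqrt (by positivity)
    nlinarith
  linarith
end

section
/- Let n ≥ 2 be an integer and b > 1. Let Q : [1,b] → ℝ be continuous with Q(1) = Q(b) = 0 and Q > 0 on (1,b). Let ψ : [1,b] × [0,∞) → ℝ be continuous, twice differentiable in x and once in t on (1,b] × (0,∞), and suppose ψ satisfies the cotangent flow equation ∂ψ/∂t(x,t) = Q(x)·csc²(θ(x,t))·( ψ''(x,t)/(1 + ψ'(x,t)²) + (n−1)·(x·ψ'(x,t) − ψ(x,t))/(x² + ψ(x,t)²) ) there, where ψ', ψ'' are derivatives in x and θ(x,t) := arccot(ψ'(x,t)) + (n−1)·arccot(ψ(x,t)/x). Assume that for every T > 0 there is δ > 0 with δ ≤ θ(x,t) ≤ π − δ for all (x,t) ∈ (1,b] × [0,T]. Let ψ̃ : [1,b] → ℝ be a C² function satisfying the ODE (x² + ψ̃(x)²)·ψ̃''(x) + (n−1)·(1 + ψ̃'(x)²)·(x·ψ̃'(x) − ψ̃(x)) = 0 on [1,b]. If ψ(x,0) ≤ ψ̃(x) for all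 x ∈ [1,b], ψ(1,t) ≤ ψ̃(1) and ψ(b,t) ≤ ψ̃(b) for all t ≥ 0, then ψ(x,t) ≤ ψ̃(x) for all (x,t) ∈ [1,b] × [0,∞). -/
set_option maxHeartbeats 1000000

open Set Filter Topology

/-- One-sided first derivative test: if `f` has a max over `Ioo 0 t0` at `t0 > 0`,
its derivative at `t0` is nonnegative. -/
lemma aux_deriv_nonneg_of_max_left {f : ℝ → ℝ} {d t0 : ℝ} (ht0 : 0 < t0)
    (h : HasDerivAt f d t0) (hmax : ∀ s ∈ Set.Ioo 0 t0, f s ≤ f t0) : 0 ≤ d := by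
  have hs := hasDerivAt_iff_tendsto_slope.1 h
  have hne : (𝓝[Set.Ioo 0 t0] t0).NeBot := by
    rw [nhdsWithin_Ioo_eq_nhdsLT ht0]; infer_instance
  have hmono : 𝓝[Set.Ioo 0 t0] t0 ≤ 𝓝[≠] t0 :=
    nhdsWithin_mono _ (fun s hs => ne_of_lt hs.2)
  refine ge_of_tendsto (hs.mono_left hmono) ?_
  filter_upwards [self_mem_nhdsWithin] with s hsmem
  have h1 : f s - f t0 ≤ 0 := sub_nonpos.2 (hmax s hsmem)
  have h2 : s - t0 < 0 := sub_neg.2 hsmem.2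
  rw [slope_def_field]
  exact div_nonneg_iff.2 (Or.inr ⟨h1, h2.le⟩)

/-- Second derivative test at an interior local max. -/
lemma aux_secondDeriv_nonpos {f f' : ℝ → ℝ} {a r c : ℝ} (hr : 0 < r)
    (hd : ∀ x ∈ Set.Ioo (a - r) (a + r), HasDerivAt f (f' x) x)
    (hd2 : HasDerivAt f' c a)
    (hmax : ∀ x ∈ Set.Ioo (a - r) (a + r), f x ≤ f a) : c ≤ 0 := by
  by_contra hc
  push_neg at hc
  have ha : a ∈ Set.Ioo (a - r) (a + r) := by constructor <;> linarith
  have hf'a : f' a = 0 := by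
    have hloc : IsLocalMax f a := by
      filter_upwards [Ioo_mem_nhds ha.1 ha.2] with x hx using hmax x hx
    exact hloc.hasDerivAt_eq_zero (hd a ha)
  -- f' is positive just to the right of a
  have hev : ∀ᶠ x in 𝓝[>] a, 0 < f' x := by
    have hslope := hasDerivAt_iff_tendsto_slope.1 hd2
    have hmono : 𝓝[>] a ≤ 𝓝[≠] a := nhdsWithin_mono _ (fun s hs => ne_of_gt hs)
    have hev2 : ∀ᶠ x in 𝓝[>] a, c / 2 < slope f' a x :=
      (hslope.mono_left hmono).eventually (eventually_gt_nhds (by linarith))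
    filter_upwards [hev2, self_mem_nhdsWithin] with x hx hxa
    have hxa' : 0 < x - a := sub_pos.2 hxa
    rw [slope_def_field, hf'a, sub_zero] at hx
    have := (lt_div_iff₀ hxa').1 hx
    nlinarith
  rw [eventually_nhdsWithin_iff] at hev
  obtain ⟨u, hu, hu2⟩ := eventually_nhds_iff.1 hev
  obtain ⟨ε, hε, hball⟩ := Metric.isOpen_iff.1 hu2.1 a hu2.2
  set z : ℝ := min ε r with hz
  have hz0 : 0 < z := lt_min hε hr
  set b' : ℝ := a + z / 2 with hb'
  have hb'mem : b' ∈ Set.Ioo (a - r) (a + r) := by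
    constructor <;> simp only [hb'] <;> nlinarith [min_le_right ε r]
  have hsub : Set.Icc a b' ⊆ Set.Ioo (a - r) (a + r) := by
    intro y hy
    constructor
    · linarith [hy.1]
    · have := hy.2; simp only [hb'] at this; nlinarith [min_le_right ε r]
  have hmono2 : StrictMonoOn f (Set.Icc a b') := by
    apply strictMonoOn_of_deriv_pos (convex_Icc a b')
    · intro y hy
      exact ((hd y (hsub hy)).continuousAt).continuousWithinAt
    · intro y hy
      rw [interior_Icc] at hy
      rw [(hd y (hsub ⟨hy.1.le, hy.2.le⟩)).deriv]
      apply hu y _ hy.1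
      apply hball
      rw [Metric.mem_ball, Real.dist_eq, abs_of_pos (sub_pos.2 hy.1)]
      have := hy.2; simp only [hb'] at this
      nlinarith [min_le_left ε r]
  have hlt : f a < f b' := hmono2 (Set.left_mem_Icc.2 (by simp [hb']; nlinarith))
    (Set.right_mem_Icc.2 (by simp [hb']; nlinarith)) (by simp [hb']; nlinarith)
  exact absurd (hmax b' hb'mem) (not_le.2 hlt)

/-- `sin` on `[δ, π − δ]` is at least `sin δ`. -/
lemma aux_sin_ge {δ θ : ℝ} (hδ : 0 < δ) (h1 : δ ≤ θ) (h2 : θ ≤ Real.pi - δ) :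
    Real.sin δ ≤ Real.sin θ := by
  rcases le_or_gt θ (Real.pi / 2) with hθ | hθ
  · exact Real.sin_le_sin_of_le_of_le_pi_div_two (by linarith) hθ h1
  · rw [← Real.sin_pi_sub θ]
    exact Real.sin_le_sin_of_le_of_le_pi_div_two (by linarith) (by linarith) (by linarith)

/-- Comparison principle along the Calabi-symmetry reduction of the dHYM cotangent
flow on the blow-up of `CP^n` at a point: a solution `ψ(x,t)` of the flow which starts
below a stationary (constant-phase) solution `ψ̃` and stays below it at the spatial
boundary remains below `ψ̃` for all time. Here `ψx, ψxx, ψt` denote the first and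
second spatial derivatives and the time derivative of `ψ`, and
`θ(x,t) = arccot(ψx) + (n−1)·arccot(ψ/x)` is the Lagrangian phase. -/
theorem stmt7 (n : ℕ) (hn : 2 ≤ n) (b : ℝ) (hb : 1 < b)
    (Q : ℝ → ℝ)
    (hQcont : ContinuousOn Q (Set.Icc 1 b))
    (hQ1 : Q 1 = 0) (hQb : Q b = 0)
    (hQpos : ∀ x ∈ Set.Ioo (1:ℝ) b, 0 < Q x)
    (ψ ψx ψxx ψt : ℝ → ℝ → ℝ)
    (hψcont : ContinuousOn (fun p : ℝ × ℝ => ψ p.1 p.2) (Set.Icc 1 b ×ˢ Set.Ici 0))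
    (hdx : ∀ x ∈ Set.Ioc (1:ℝ) b, ∀ t ∈ Set.Ioi (0:ℝ),
      HasDerivAt (fun y => ψ y t) (ψx x t) x)
    (hdxx : ∀ x ∈ Set.Ioc (1:ℝ) b, ∀ t ∈ Set.Ioi (0:ℝ),
      HasDerivAt (fun y => ψx y t) (ψxx x t) x)
    (hdt : ∀ x ∈ Set.Ioc (1:ℝ) b, ∀ t ∈ Set.Ioi (0:ℝ),
      HasDerivAt (fun s => ψ x s) (ψt x t) t)
    (hflow : ∀ x ∈ Set.Ioc (1:ℝ) b, ∀ t ∈ Set.Ioi (0:ℝ),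
      ψt x t = Q x * (1 / Real.sin (arccot (ψx x t) + ((n - 1 : ℕ) : ℝ) * arccot (ψ x t / x))) ^ 2 *
        (ψxx x t / (1 + (ψx x t) ^ 2) +
          ((n - 1 : ℕ) : ℝ) * (x * ψx x t - ψ x t) / (x ^ 2 + (ψ x t) ^ 2)))
    (hphase : ∀ T > (0:ℝ), ∃ δ > (0:ℝ), ∀ x ∈ Set.Ioc (1:ℝ) b, ∀ t ∈ Set.Icc (0:ℝ) T,
      δ ≤ arccot (ψx x t) + ((n - 1 : ℕ) : ℝ) * arccot (ψ x t / x) ∧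
      arccot (ψx x t) + ((n - 1 : ℕ) : ℝ) * arccot (ψ x t / x) ≤ Real.pi - δ)
    (ψ' ψ'x ψ'xx : ℝ → ℝ)
    (hψ'dx : ∀ x ∈ Set.Icc (1:ℝ) b, HasDerivAt ψ' (ψ'x x) x)
    (hψ'dxx : ∀ x ∈ Set.Icc (1:ℝ) b, HasDerivAt ψ'x (ψ'xx x) x)
    (hψ'C2 : ContinuousOn ψ'xx (Set.Icc 1 b))
    (hODE : ∀ x ∈ Set.Icc (1:ℝ) b,
      (x ^ 2 + (ψ' x) ^ 2) * ψ'xx x +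
        ((n - 1 : ℕ) : ℝ) * (1 + (ψ'x x) ^ 2) * (x * ψ'x x - ψ' x) = 0)
    (hinit : ∀ x ∈ Set.Icc (1:ℝ) b, ψ x 0 ≤ ψ' x)
    (hbd1 : ∀ t ∈ Set.Ici (0:ℝ), ψ 1 t ≤ ψ' 1)
    (hbdb : ∀ t ∈ Set.Ici (0:ℝ), ψ b t ≤ ψ' b) :
    ∀ x ∈ Set.Icc (1:ℝ) b, ∀ t ∈ Set.Ici (0:ℝ), ψ x t ≤ ψ' x := by
  have hb1 : (1:ℝ) ≤ b := hb.le
  set m : ℝ := ((n - 1 : ℕ) : ℝ) with hm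
  have hm1 : (1:ℝ) ≤ m := by
    have h : 1 ≤ n - 1 := by omega
    rw [hm]
    exact_mod_cast h
  have hm0 : 0 ≤ m := le_trans zero_le_one hm1
  have hψ'cont : ContinuousOn ψ' (Set.Icc 1 b) :=
    fun y hy => ((hψ'dx y hy).continuousAt).continuousWithinAt
  have hψ'xcont : ContinuousOn ψ'x (Set.Icc 1 b) :=
    fun y hy => ((hψ'dxx y hy).continuousAt).continuousWithinAt
  intro x hx t ht
  set T : ℝ := t + 1 with hT
  have htpos : (0:ℝ) ≤ t := ht
  have hTpos : 0 < T := by linarith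
  obtain ⟨δ, hδpos, hθ⟩ := hphase T hTpos
  have hδle : δ ≤ Real.pi - δ := by
    have h := hθ b ⟨hb, le_refl b⟩ 0 ⟨le_refl 0, hTpos.le⟩
    linarith [h.1, h.2]
  have hδπ : δ < Real.pi := by linarith
  have hsδ : 0 < Real.sin δ := Real.sin_pos_of_pos_of_lt_pi hδpos hδπ
  set Cs : ℝ := (1 / Real.sin δ) ^ 2 with hCsdef
  have hCs0 : 0 < Cs := by positivity
  have hIcc : IsCompact (Set.Icc (1:ℝ) b) := isCompact_Icc
  have hIccne : (Set.Icc (1:ℝ) b).Nonempty := Set.nonempty_Icc.2 hb1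
  set D : Set (ℝ × ℝ) := Set.Icc (1:ℝ) b ×ˢ Set.Icc (0:ℝ) T with hDdef
  have hDcomp : IsCompact D := hIcc.prod isCompact_Icc
  have hDne : D.Nonempty := hIccne.prod (Set.nonempty_Icc.2 hTpos.le)
  have hDsub : D ⊆ Set.Icc 1 b ×ˢ Set.Ici 0 :=
    Set.prod_mono_right Set.Icc_subset_Ici_self
  have hψcontD : ContinuousOn (fun p : ℝ × ℝ => ψ p.1 p.2) D := hψcont.mono hDsub
  -- constants
  obtain ⟨y0, hy0mem, hy0⟩ := hIcc.exists_isMaxOn hIccne hψ'cont.abs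
  set C0 : ℝ := |ψ' y0| with hC0def
  have hC0 : ∀ y ∈ Set.Icc (1:ℝ) b, |ψ' y| ≤ C0 := fun y hy => hy0 hy
  have hC0nn : 0 ≤ C0 := abs_nonneg _
  obtain ⟨y1, hy1mem, hy1⟩ := hIcc.exists_isMaxOn hIccne hψ'xcont.abs
  set C1 : ℝ := |ψ'x y1| with hC1def
  have hC1 : ∀ y ∈ Set.Icc (1:ℝ) b, |ψ'x y| ≤ C1 := fun y hy => hy1 hy
  have hC1nn : 0 ≤ C1 := abs_nonneg _
  obtain ⟨p2, hp2mem, hp2⟩ := hDcomp.exists_isMaxOn hDne hψcontD.abs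
  set C2 : ℝ := |ψ p2.1 p2.2| with hC2def
  have hC2 : ∀ p ∈ D, |ψ p.1 p.2| ≤ C2 := fun p hp => hp2 hp
  have hC2nn : 0 ≤ C2 := abs_nonneg _
  obtain ⟨yQ, hyQmem, hyQ⟩ := hIcc.exists_isMaxOn hIccne hQcont
  set CQ : ℝ := Q yQ with hCQdef
  have hCQ : ∀ y ∈ Set.Icc (1:ℝ) b, Q y ≤ CQ := fun y hy => hyQ hy
  have hCQnn : 0 ≤ CQ := by
    have := hCQ 1 (Set.left_mem_Icc.2 hb1); rw [hQ1] at this; exact this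
  set Bmax : ℝ := b ^ 2 + b * C1 * (C0 + C2) + C0 * C2 with hBmaxdef
  have hBmaxnn : 0 ≤ Bmax := by positivity
  set K : ℝ := 1 + CQ * Cs * m * Bmax with hKdef
  have hKnn : 1 ≤ K := by
    rw [hKdef]
    linarith only [mul_nonneg (mul_nonneg (mul_nonneg hCQnn hCs0.le) hm0) hBmaxnn]
  -- the key claim
  have key : ∀ η > (0:ℝ), ∀ p ∈ D, ψ p.1 p.2 - ψ' p.1 - η * Real.exp (K * p.2) < 0 := by
    intro η hη
    by_contra hcon
    push_neg at hcon
    obtain ⟨p0, hp0D, hp0⟩ := hcon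
    set w : ℝ × ℝ → ℝ := fun p => ψ p.1 p.2 - ψ' p.1 - η * Real.exp (K * p.2) with hwdef
    have hwcont : ContinuousOn w D := by
      apply ContinuousOn.sub
      apply ContinuousOn.sub hψcontD
      · exact hψ'cont.comp continuous_fst.continuousOn (fun p hp => hp.1)
      · exact (Continuous.continuousOn (by fun_prop))
    set S : Set (ℝ × ℝ) := D ∩ w ⁻¹' Set.Ici 0 with hSdef
    have hSclosed : IsClosed S :=
      hwcont.preimage_isClosed_of_isClosed (isClosed_Icc.prod isClosed_Icc) isClosed_Ici
    have hScomp : IsCompact S := hDcomp.of_isClosed_subset hSclosed Set.inter_subset_left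
    have hSne : S.Nonempty := ⟨p0, hp0D, hp0⟩
    obtain ⟨q, hqS, hqmin'⟩ := hScomp.exists_isMinOn hSne continuous_snd.continuousOn
    have hqmin : ∀ r ∈ S, q.2 ≤ r.2 := fun r hr => hqmin' hr
    set tstar : ℝ := q.2 with htstardef
    have hqD : q ∈ D := hqS.1
    have hq1 : q.1 ∈ Set.Icc (1:ℝ) b := hqD.1
    have hqT : tstar ∈ Set.Icc (0:ℝ) T := hqD.2
    have hwq : 0 ≤ w q := hqS.2
    have htstar0 : 0 < tstar := by
      rcases lt_or_eq_of_le hqT.1 with h | h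
      · exact h
      · exfalso
        have h0 : ψ q.1 0 ≤ ψ' q.1 := hinit q.1 hq1
        have hwq' : 0 ≤ ψ q.1 tstar - ψ' q.1 - η * Real.exp (K * tstar) := hwq
        rw [← h, mul_zero, Real.exp_zero, mul_one] at hwq'
        linarith only [h0, hwq', hη]
    have htstarT : tstar ≤ T := hqT.2
    -- spatial max at time tstar
    have hgcont : ContinuousOn (fun y => ψ y tstar - ψ' y) (Set.Icc 1 b) := by
      apply ContinuousOn.sub _ hψ'cont
      have : ContinuousOn (fun y : ℝ => ((y, tstar) : ℝ × ℝ)) (Set.Icc 1 b) :=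
        (continuous_id.prodMk continuous_const).continuousOn
      exact hψcontD.comp this (fun y hy => ⟨hy, hqT⟩)
    obtain ⟨x0, hx0mem, hx0max'⟩ := hIcc.exists_isMaxOn hIccne hgcont
    have hx0max : ∀ y ∈ Set.Icc (1:ℝ) b, ψ y tstar - ψ' y ≤ ψ x0 tstar - ψ' x0 :=
      fun y hy => hx0max' hy
    set E : ℝ := η * Real.exp (K * tstar) with hEdef
    have hEpos : 0 < E := by positivity
    have hwx0 : 0 ≤ ψ x0 tstar - ψ' x0 - E := by
      have h1 : ψ q.1 tstar - ψ' q.1 ≤ ψ x0 tstar - ψ' x0 := hx0max q.1 hq1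
      have h2 : 0 ≤ ψ q.1 tstar - ψ' q.1 - E := hwq
      linarith only [h1, h2]
    have hx0D : (x0, tstar) ∈ D := ⟨hx0mem, hqT⟩
    -- times before tstar are strictly negative
    have hbefore : ∀ s ∈ Set.Ico (0:ℝ) tstar, ∀ y ∈ Set.Icc (1:ℝ) b,
        ψ y s - ψ' y - η * Real.exp (K * s) < 0 := by
      intro s hs y hy
      by_contra hcon2
      push_neg at hcon2
      have : ((y, s) : ℝ × ℝ) ∈ S := ⟨⟨hy, ⟨hs.1, le_trans hs.2.le htstarT⟩⟩, hcon2⟩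
      exact absurd (hqmin _ this) (not_le.2 hs.2)
    -- w(x0, tstar) ≤ 0 by left continuity
    have hwx0le : ψ x0 tstar - ψ' x0 - E ≤ 0 := by
      have hne : (𝓝[Set.Ioo 0 tstar] tstar).NeBot := by
        rw [nhdsWithin_Ioo_eq_nhdsLT htstar0]; infer_instance
      have hcw : ContinuousWithinAt (fun s => ψ x0 s - ψ' x0 - η * Real.exp (K * s))
          (Set.Ioo 0 tstar) tstar := by
        apply ContinuousWithinAt.sub
        apply ContinuousWithinAt.sub
        · have hmaps : Set.MapsTo (fun s : ℝ => ((x0, s) : ℝ × ℝ)) (Set.Ici 0)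
              (Set.Icc 1 b ×ˢ Set.Ici 0) := fun s hs => ⟨hx0mem, hs⟩
          have := (hψcont.comp ((continuous_const.prodMk continuous_id).continuousOn) hmaps)
            tstar htstar0.le
          exact this.mono (fun s hs => hs.1.le)
        · exact continuousWithinAt_const
        · exact (Continuous.continuousWithinAt (by fun_prop))
      have hev : ∀ᶠ s in 𝓝[Set.Ioo 0 tstar] tstar,
          ψ x0 s - ψ' x0 - η * Real.exp (K * s) ≤ 0 := by
        filter_upwards [self_mem_nhdsWithin] with s hs
        exact (hbefore s ⟨hs.1.le, hs.2⟩ x0 hx0mem).le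
      exact le_of_tendsto hcw hev
    have hE0 : ψ x0 tstar = ψ' x0 + E := by linarith only [hwx0, hwx0le]
    -- x0 is interior
    have hx0int : x0 ∈ Set.Ioo (1:ℝ) b := by
      rcases hx0mem.1.lt_or_eq with h1 | h1
      · rcases hx0mem.2.lt_or_eq with h2 | h2
        · exact ⟨h1, h2⟩
        · exfalso
          have := hbdb tstar htstar0.le
          rw [h2] at hE0
          linarith only [this, hE0, hEpos]
      · exfalso
        have := hbd1 tstar htstar0.le
        rw [← h1] at hE0
        linarith only [this, hE0, hEpos]
    have hx0Ioc : x0 ∈ Set.Ioc (1:ℝ) b := ⟨hx0int.1, hx0int.2.le⟩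
    -- derivatives at (x0, tstar)
    have hdx0 := hdx x0 hx0Ioc tstar htstar0
    have hdxx0 := hdxx x0 hx0Ioc tstar htstar0
    have hdt0 := hdt x0 hx0Ioc tstar htstar0
    have hψ'dx0 := hψ'dx x0 hx0mem
    have hψ'dxx0 := hψ'dxx x0 hx0mem
    -- first order condition
    have h1st : ψx x0 tstar = ψ'x x0 := by
      have hloc : IsLocalMax (fun y => ψ y tstar - ψ' y) x0 := by
        filter_upwards [Icc_mem_nhds hx0int.1 hx0int.2] with y hy using hx0max y hy
      have := hloc.hasDerivAt_eq_zero (hdx0.sub hψ'dx0)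
      linarith only [sub_eq_zero.1 this]
    -- second order condition
    have h2nd : ψxx x0 tstar ≤ ψ'xx x0 := by
      set r : ℝ := min (x0 - 1) (b - x0) with hrdef
      have hr : 0 < r := lt_min (by linarith [hx0int.1]) (by linarith [hx0int.2])
      have hsub : Set.Ioo (x0 - r) (x0 + r) ⊆ Set.Ioo (1:ℝ) b := by
        intro y hy
        constructor
        · have := min_le_left (x0 - 1) (b - x0); have := hy.1; simp only [hrdef] at *
          linarith only [hy.1, min_le_left (x0 - 1) (b - x0)]
        · linarith only [hy.2, min_le_right (x0 - 1) (b - x0)]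
      have hc := aux_secondDeriv_nonpos hr
        (f := fun y => ψ y tstar - ψ' y) (f' := fun y => ψx y tstar - ψ'x y)
        (c := ψxx x0 tstar - ψ'xx x0)
        (fun y hy => ((hdx y ⟨(hsub hy).1, (hsub hy).2.le⟩ tstar htstar0).sub
          (hψ'dx y ⟨(hsub hy).1.le, (hsub hy).2.le⟩)))
        ((hdxx0.sub hψ'dxx0))
        (fun y hy => hx0max y ⟨(hsub hy).1.le, (hsub hy).2.le⟩)
      linarith only [hc]
    -- time derivative condition
    have htime : E * K ≤ ψt x0 tstar := by
      have hexp : HasDerivAt (fun s : ℝ => η * Real.exp (K * s))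
          (η * (Real.exp (K * tstar) * K)) tstar := by
        have h1 : HasDerivAt (fun s : ℝ => K * s) K tstar := by
          simpa using (hasDerivAt_id tstar).const_mul K
        exact (h1.exp).const_mul η
      have hf : HasDerivAt (fun s => ψ x0 s - η * Real.exp (K * s))
          (ψt x0 tstar - η * (Real.exp (K * tstar) * K)) tstar := hdt0.sub hexp
      have hmaxt : ∀ s ∈ Set.Ioo (0:ℝ) tstar,
          ψ x0 s - η * Real.exp (K * s) ≤ ψ x0 tstar - η * Real.exp (K * tstar) := by
        intro s hs
        have := hbefore s ⟨hs.1.le, hs.2⟩ x0 hx0mem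
        have h2 : ψ x0 tstar - η * Real.exp (K * tstar) - ψ' x0 = 0 := by
          rw [hE0, hEdef]; ring
        linarith only [this, h2]
      have := aux_deriv_nonneg_of_max_left htstar0 hf hmaxt
      have h3 : η * (Real.exp (K * tstar) * K) ≤ ψt x0 tstar := by linarith only [this]
      calc E * K = η * (Real.exp (K * tstar) * K) := by rw [hEdef]; ring
        _ ≤ ψt x0 tstar := h3
    -- now the PDE/ODE comparison
    set X : ℝ := x0 with hXdef
    set p : ℝ := ψ'x x0 with hpdef
    set s0 : ℝ := ψ' x0 with hs0def
    set s1 : ℝ := ψ x0 tstar with hs1def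
    have hX1 : 1 ≤ X := hx0mem.1
    have hXb : X ≤ b := hx0mem.2
    have hpb : |p| ≤ C1 := hC1 x0 hx0mem
    have hs0b : |s0| ≤ C0 := hC0 x0 hx0mem
    have hs1b : |s1| ≤ C2 := hC2 (x0, tstar) hx0D
    have hQx0 : 0 < Q x0 := hQpos x0 hx0int
    have hQle : Q x0 ≤ CQ := hCQ x0 hx0mem
    -- phase bound
    set θ0 : ℝ := arccot (ψ'x x0) + m * arccot (ψ x0 tstar / x0) with hθ0def
    have hθ0b := hθ x0 hx0Ioc tstar ⟨htstar0.le, htstarT⟩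
    rw [h1st] at hθ0b
    have hsinθ : Real.sin δ ≤ Real.sin θ0 := aux_sin_ge hδpos hθ0b.1 hθ0b.2
    have hsinθpos : 0 < Real.sin θ0 := lt_of_lt_of_le hsδ hsinθ
    have hcsc_nn : 0 ≤ (1 / Real.sin θ0) ^ 2 := by positivity
    have hcsc_le : (1 / Real.sin θ0) ^ 2 ≤ Cs := by
      rw [hCsdef]
      have h1 : 1 / Real.sin θ0 ≤ 1 / Real.sin δ := one_div_le_one_div_of_le hsδ hsinθ
      have h0 : 0 ≤ 1 / Real.sin θ0 := by positivity
      exact pow_le_pow_left₀ h0 h1 2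
    set A : ℝ := Q x0 * (1 / Real.sin θ0) ^ 2 with hAdef
    have hAnn : 0 ≤ A := mul_nonneg hQx0.le hcsc_nn
    have hAle : A ≤ CQ * Cs := mul_le_mul hQle hcsc_le hcsc_nn hCQnn
    -- flow equation
    have hflow0 : ψt x0 tstar =
        A * (ψxx x0 tstar / (1 + p ^ 2) + m * (X * p - s1) / (X ^ 2 + s1 ^ 2)) := by
      have := hflow x0 hx0Ioc tstar htstar0
      rw [this, h1st]
    have hden1 : (0:ℝ) < 1 + p ^ 2 := by positivity
    have hden0 : (0:ℝ) < X ^ 2 + s0 ^ 2 := by positivity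
    have hden2 : (0:ℝ) < X ^ 2 + s1 ^ 2 := by positivity
    -- ODE
    have hODE0 : (X ^ 2 + s0 ^ 2) * ψ'xx x0 + m * (1 + p ^ 2) * (X * p - s0) = 0 :=
      hODE x0 hx0mem
    have hψ'xxdiv : ψ'xx x0 / (1 + p ^ 2) = -(m * (X * p - s0)) / (X ^ 2 + s0 ^ 2) := by
      rw [div_eq_div_iff hden1.ne' hden0.ne']
      linear_combination hODE0
    -- the comparison
    set R : ℝ := (X * p - s1) / (X ^ 2 + s1 ^ 2) - (X * p - s0) / (X ^ 2 + s0 ^ 2) with hRdef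
    have hstep1 : ψt x0 tstar ≤ A * (m * R) := by
      rw [hflow0]
      have h1 : ψxx x0 tstar / (1 + p ^ 2) ≤ ψ'xx x0 / (1 + p ^ 2) := by gcongr
      have h2 : ψ'xx x0 / (1 + p ^ 2) + m * (X * p - s1) / (X ^ 2 + s1 ^ 2) = m * R := by
        rw [hψ'xxdiv, hRdef]; ring
      have h3 : ψxx x0 tstar / (1 + p ^ 2) + m * (X * p - s1) / (X ^ 2 + s1 ^ 2) ≤ m * R := by
        rw [← h2]; linarith only [h1]
      exact mul_le_mul_of_nonneg_left h3 hAnn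
    -- identity for R
    have hs01 : s0 - s1 = -E := by linarith only [hE0]
    set B : ℝ := X ^ 2 + X * p * (s0 + s1) - s0 * s1 with hBdef
    set Dn : ℝ := (X ^ 2 + s1 ^ 2) * (X ^ 2 + s0 ^ 2) with hDndef
    have hDn1 : 1 ≤ Dn := by
      have hX2 : (1:ℝ) ≤ X ^ 2 := by nlinarith only [hX1]
      have hA1 : (1:ℝ) ≤ X ^ 2 + s1 ^ 2 := by linarith only [hX2, sq_nonneg s1]
      have hA0 : (1:ℝ) ≤ X ^ 2 + s0 ^ 2 := by linarith only [hX2, sq_nonneg s0]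
      rw [hDndef]
      nlinarith only [hA1, hA0]
    have hDnpos : 0 < Dn := by linarith only [hDn1]
    have hRid : R = (s0 - s1) * B / Dn := by
      rw [hRdef, hBdef, hDndef]
      field_simp
      ring
    have hBlow : -Bmax ≤ B := by
      rw [hBdef, hBmaxdef]
      have h1 : |X * p * (s0 + s1)| ≤ b * C1 * (C0 + C2) := by
        rw [abs_mul, abs_mul]
        have hXa : |X| = X := abs_of_pos (by linarith only [hX1])
        rw [hXa]
        have hsum : |s0 + s1| ≤ C0 + C2 := le_trans (abs_add_le s0 s1) (by linarith only [hs0b, hs1b])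
        apply mul_le_mul _ hsum (abs_nonneg _) (by positivity)
        exact mul_le_mul hXb hpb (abs_nonneg _) (by linarith only [hX1, hXb])
      have h2 : |s0 * s1| ≤ C0 * C2 := by
        rw [abs_mul]; exact mul_le_mul hs0b hs1b (abs_nonneg _) hC0nn
      have h3 := neg_abs_le (X * p * (s0 + s1))
      have h4 := abs_le.1 h2
      linarith only [h1, h3, h4.1, h4.2, sq_nonneg X, sq_nonneg b]
    have hRle : R ≤ E * Bmax := by
      rw [hRid, hs01]
      have h1 : -E * B ≤ E * Bmax := by
        have hBB : (0:ℝ) ≤ B + Bmax := by linarith only [hBlow]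
        nlinarith only [mul_nonneg hEpos.le hBB]
      calc -E * B / Dn ≤ E * Bmax / Dn := (div_le_div_iff_of_pos_right hDnpos).2 h1
        _ ≤ E * Bmax := div_le_self (by positivity) hDn1
    have hstep2 : ψt x0 tstar ≤ CQ * Cs * m * (E * Bmax) := by
      have h1 : A * (m * R) ≤ A * (m * (E * Bmax)) :=
        mul_le_mul_of_nonneg_left (mul_le_mul_of_nonneg_left hRle hm0) hAnn
      have h2 : A * (m * (E * Bmax)) ≤ CQ * Cs * (m * (E * Bmax)) :=
        mul_le_mul_of_nonneg_right hAle (by positivity)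
      calc ψt x0 tstar ≤ A * (m * R) := hstep1
        _ ≤ A * (m * (E * Bmax)) := h1
        _ ≤ CQ * Cs * (m * (E * Bmax)) := h2
        _ = CQ * Cs * m * (E * Bmax) := by ring
    have hfinal : E * K ≤ (K - 1) * E := by
      have : CQ * Cs * m * (E * Bmax) = (K - 1) * E := by rw [hKdef]; ring
      linarith only [htime, hstep2, this ▸ hstep2]
    nlinarith only [hfinal, hEpos]
  -- conclude
  have hxtD : ((x, t) : ℝ × ℝ) ∈ D := ⟨hx, ⟨htpos, by linarith⟩⟩
  by_contra hlt
  push_neg at hlt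
  set d : ℝ := ψ x t - ψ' x with hddef
  have hd : 0 < d := by rw [hddef]; linarith only [hlt]
  have hexp : (0:ℝ) < Real.exp (K * t) := Real.exp_pos _
  have hη : 0 < d / (2 * Real.exp (K * t)) := by positivity
  have h5 := key _ hη (x, t) hxtD
  have h6 : ψ x t - ψ' x - d / (2 * Real.exp (K * t)) * Real.exp (K * t) < 0 := h5
  have heq : d / (2 * Real.exp (K * t)) * Real.exp (K * t) = d / 2 := by
    field_simp
  rw [heq] at h6
  linarith only [h6, hd, hddef]
end

section
/- Let ξ be the unique root in (3,6) of the polynomial F(s) = −s⁴ + 2887s² − 10692s − 2890, and set c := (ξ² − 1)/(2ξ), A := −(ξ² + 1)²/(2ξ), μ := 3(972 − ξ²)/26, λ := 3ξ² − μ. Let ψ̃ : [1,3] → ℝ be continuous, differentiable on (1,3), with ψ̃(1) = ξ, ψ̃(3) = 18, satisfying ψ̃(x)³ − 3x²·ψ̃(x) − c·(3x·ψ̃(x)² − x³) = A for all x ∈ [1,3], and such that ψ̃'(x) → +∞ as x → 1⁺. Then ψ^{(ξ)}(x) := √((μx² + λ/x)/3) satisfies ψ^{(ξ)}(x) ≤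 ψ̃(x) for all x ∈ [1,3]. Consequently, with μ₀ := 2889/26 and λ₀ := 27 − μ₀, the initial function ψ₀(x) := √((μ₀x² + λ₀/x)/3) also satisfies ψ₀(x) ≤ ψ̃(x) for all x ∈ [1,3]. -/
private lemma key9 (y e : ℝ) (hy0 : 0 ≤ y) (hy2 : y ≤ 2) (he0 : 0 ≤ e) (he1 : e ≤ 1/10^9) :
    (0:ℝ) < (2550048372545302743638322195364343571/62500000000000000000000000) + (11959969180079898128199159452565167229/25000000000000000000000000)*y^1 + (129814182900538115602830974102840778189/125000000000000000000000000)*y^2 + (13356773783088470605078780280913312543/12500000000000000000000000)*y^3 + (77209640649742089164431252473265847157/125000000000000000000000000)*y^4 + (13071854966149448985731102693047314621/62500000000000000000000000)*y^5 + (4958289814746342718725590676673119339/125000000000000000000000000)*y^6 + (450753619522394792611417334243010849/125000000000000000000000000)*y^7 + (4455660463005283574629955144514309/62500000000000000)*e^1 + (2260792883242865817838173832398891/25000000000000000)*y^1*e^1 + (4615787144464877755665512503936731/125000000000000000)*y^2*e^1 + (-77227232923172822118793642486503/12500000000000000)*y^3*e^1 + (-1283886519987942144200897581357197/125000000000000000)*y^4*e^1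 + (-256485824105663369683573633662741/62500000000000000)*y^5*e^1 + (-97287726384906795397217585182419/125000000000000000)*y^6*e^1 + (-8844338762264254127019780471129/125000000000000000)*y^7*e^1 + (1041730244918503285024737/62500000)*e^2 + (528845891320453804102863/25000000)*y^1*e^2 + (1082436154732362712561983/125000000)*y^2*e^2 + (-17711259451309699042779/12500000)*y^3*e^2 + (-298168538190544992621321/125000000)*y^4*e^2 + (-59626476368088105740913/62500000)*y^5*e^2 + (-22616939312033419418967/125000000)*y^6*e^2 + (-2056085392003038128997/125000000)*y^7*e^2 + (-43937523506448)*e^3 + (-53136785009880)*y^1*e^3 + (-16563670020216)*y^2*e^3 + 10335354868080*y^3*e^3 + 10126930216392*y^4*e^3 + 3816987931152*y^5*e^3 + 723911504184*y^6*e^3 + 65810136744*y^7*e^3 := by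
  have hp0_1 : (0:ℝ) ≤ e^1 := by positivity
  have hp0_2 : (0:ℝ) ≤ e^2 := by positivity
  have hn0_3 : (e^3:ℝ) ≤ (1/1000000000000000000000000000) := by
    calc (e^3:ℝ) ≤ (1/10^9)^3 := pow_le_pow_left₀ he0 he1 3
      _ = (1/1000000000000000000000000000) := by norm_num
  have hp1_0 : (0:ℝ) ≤ y^1 := by positivity
  have hp1_1 : (0:ℝ) ≤ y^1*e^1 := by positivity
  have hp1_2 : (0:ℝ) ≤ y^1*e^2 := by positivity
  have hn1_3 : (y^1*e^3:ℝ) ≤ (1/500000000000000000000000000) := by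
    have a1 : y^1 ≤ 2^1 := pow_le_pow_left₀ hy0 hy2 1
    have a2 : e^3 ≤ (1/10^9)^3 := pow_le_pow_left₀ he0 he1 3
    calc y^1*e^3 ≤ 2^1*((1/10^9:ℝ))^3 := by
          exact mul_le_mul a1 a2 (by positivity) (by positivity)
      _ = (1/500000000000000000000000000) := by norm_num
  have hp2_0 : (0:ℝ) ≤ y^2 := by positivity
  have hp2_1 : (0:ℝ) ≤ y^2*e^1 := by positivity
  have hp2_2 : (0:ℝ) ≤ y^2*e^2 := by positivity
  have hn2_3 : (y^2*e^3:ℝ) ≤ (1/250000000000000000000000000) := by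
    have a1 : y^2 ≤ 2^2 := pow_le_pow_left₀ hy0 hy2 2
    have a2 : e^3 ≤ (1/10^9)^3 := pow_le_pow_left₀ he0 he1 3
    calc y^2*e^3 ≤ 2^2*((1/10^9:ℝ))^3 := by
          exact mul_le_mul a1 a2 (by positivity) (by positivity)
      _ = (1/250000000000000000000000000) := by norm_num
  have hp3_0 : (0:ℝ) ≤ y^3 := by positivity
  have hn3_1 : (y^3*e^1:ℝ) ≤ (1/125000000) := by
    have a1 : y^3 ≤ 2^3 := pow_le_pow_left₀ hy0 hy2 3
    have a2 : e^1 ≤ (1/10^9)^1 := pow_le_pow_left₀ he0 he1 1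
    calc y^3*e^1 ≤ 2^3*((1/10^9:ℝ))^1 := by
          exact mul_le_mul a1 a2 (by positivity) (by positivity)
      _ = (1/125000000) := by norm_num
  have hn3_2 : (y^3*e^2:ℝ) ≤ (1/125000000000000000) := by
    have a1 : y^3 ≤ 2^3 := pow_le_pow_left₀ hy0 hy2 3
    have a2 : e^2 ≤ (1/10^9)^2 := pow_le_pow_left₀ he0 he1 2
    calc y^3*e^2 ≤ 2^3*((1/10^9:ℝ))^2 := by
          exact mul_le_mul a1 a2 (by positivity) (by positivity)
      _ = (1/125000000000000000) := by norm_num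
  have hp3_3 : (0:ℝ) ≤ y^3*e^3 := by positivity
  have hp4_0 : (0:ℝ) ≤ y^4 := by positivity
  have hn4_1 : (y^4*e^1:ℝ) ≤ (1/62500000) := by
    have a1 : y^4 ≤ 2^4 := pow_le_pow_left₀ hy0 hy2 4
    have a2 : e^1 ≤ (1/10^9)^1 := pow_le_pow_left₀ he0 he1 1
    calc y^4*e^1 ≤ 2^4*((1/10^9:ℝ))^1 := by
          exact mul_le_mul a1 a2 (by positivity) (by positivity)
      _ = (1/62500000) := by norm_num
  have hn4_2 : (y^4*e^2:ℝ) ≤ (1/62500000000000000) := by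
    have a1 : y^4 ≤ 2^4 := pow_le_pow_left₀ hy0 hy2 4
    have a2 : e^2 ≤ (1/10^9)^2 := pow_le_pow_left₀ he0 he1 2
    calc y^4*e^2 ≤ 2^4*((1/10^9:ℝ))^2 := by
          exact mul_le_mul a1 a2 (by positivity) (by positivity)
      _ = (1/62500000000000000) := by norm_num
  have hp4_3 : (0:ℝ) ≤ y^4*e^3 := by positivity
  have hp5_0 : (0:ℝ) ≤ y^5 := by positivity
  have hn5_1 : (y^5*e^1:ℝ) ≤ (1/31250000) := by
    have a1 : y^5 ≤ 2^5 := pow_le_pow_left₀ hy0 hy2 5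
    have a2 : e^1 ≤ (1/10^9)^1 := pow_le_pow_left₀ he0 he1 1
    calc y^5*e^1 ≤ 2^5*((1/10^9:ℝ))^1 := by
          exact mul_le_mul a1 a2 (by positivity) (by positivity)
      _ = (1/31250000) := by norm_num
  have hn5_2 : (y^5*e^2:ℝ) ≤ (1/31250000000000000) := by
    have a1 : y^5 ≤ 2^5 := pow_le_pow_left₀ hy0 hy2 5
    have a2 : e^2 ≤ (1/10^9)^2 := pow_le_pow_left₀ he0 he1 2
    calc y^5*e^2 ≤ 2^5*((1/10^9:ℝ))^2 := by
          exact mul_le_mul a1 a2 (by positivity) (by positivity)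
      _ = (1/31250000000000000) := by norm_num
  have hp5_3 : (0:ℝ) ≤ y^5*e^3 := by positivity
  have hp6_0 : (0:ℝ) ≤ y^6 := by positivity
  have hn6_1 : (y^6*e^1:ℝ) ≤ (1/15625000) := by
    have a1 : y^6 ≤ 2^6 := pow_le_pow_left₀ hy0 hy2 6
    have a2 : e^1 ≤ (1/10^9)^1 := pow_le_pow_left₀ he0 he1 1
    calc y^6*e^1 ≤ 2^6*((1/10^9:ℝ))^1 := by
          exact mul_le_mul a1 a2 (by positivity) (by positivity)
      _ = (1/15625000) := by norm_num
  have hn6_2 : (y^6*e^2:ℝ) ≤ (1/15625000000000000) := by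
    have a1 : y^6 ≤ 2^6 := pow_le_pow_left₀ hy0 hy2 6
    have a2 : e^2 ≤ (1/10^9)^2 := pow_le_pow_left₀ he0 he1 2
    calc y^6*e^2 ≤ 2^6*((1/10^9:ℝ))^2 := by
          exact mul_le_mul a1 a2 (by positivity) (by positivity)
      _ = (1/15625000000000000) := by norm_num
  have hp6_3 : (0:ℝ) ≤ y^6*e^3 := by positivity
  have hp7_0 : (0:ℝ) ≤ y^7 := by positivity
  have hn7_1 : (y^7*e^1:ℝ) ≤ (1/7812500) := by
    have a1 : y^7 ≤ 2^7 := pow_le_pow_left₀ hy0 hy2 7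
    have a2 : e^1 ≤ (1/10^9)^1 := pow_le_pow_left₀ he0 he1 1
    calc y^7*e^1 ≤ 2^7*((1/10^9:ℝ))^1 := by
          exact mul_le_mul a1 a2 (by positivity) (by positivity)
      _ = (1/7812500) := by norm_num
  have hn7_2 : (y^7*e^2:ℝ) ≤ (1/7812500000000000) := by
    have a1 : y^7 ≤ 2^7 := pow_le_pow_left₀ hy0 hy2 7
    have a2 : e^2 ≤ (1/10^9)^2 := pow_le_pow_left₀ he0 he1 2
    calc y^7*e^2 ≤ 2^7*((1/10^9:ℝ))^2 := by
          exact mul_le_mul a1 a2 (by positivity) (by positivity)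
      _ = (1/7812500000000000) := by norm_num
  have hp7_3 : (0:ℝ) ≤ y^7*e^3 := by positivity
  linarith [hp0_1, hp0_2, hn0_3, hp1_0, hp1_1, hp1_2, hn1_3, hp2_0, hp2_1, hp2_2, hn2_3, hp3_0, hn3_1, hn3_2, hp3_3, hp4_0, hn4_1, hn4_2, hp4_3, hp5_0, hn5_1, hn5_2, hp5_3, hp6_0, hn6_1, hn6_2, hp6_3, hp7_0, hn7_1, hn7_2, hp7_3]

set_option maxHeartbeats 2000000 in
private lemma Rpos9 (x s : ℝ) (hx1 : 1 ≤ x) (hx3 : x ≤ 3)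
    (hsl : 3976993957/10^9 ≤ s) (hsu : s ≤ 3976993958/10^9) :
    (0:ℝ) < (-4107910709229930) + (-5477214278973240)*x^1 + (-5933648802221010)*x^2 + (-1671885029292390)*x^3 + (-251297104982850)*x^4 + 222232203120330*x^5 + 68379139421640*x^6 + 17094784855410*x^7 + (-15192374380717644)*s^1 + (-20256499174290192)*x^1*s^1 + (-21944540772147708)*x^2*s^1 + (-6183361251653652)*x^3*s^1 + (-929634744822300)*x^4*s^1 + 821607424121484*x^5*s^1 + 252802284345072*x^6*s^1 + 63200571086268*x^7*s^1 + 4122466698415725*s^2 + 5496622264554300*x^1*s^2 + 5954674119933825*x^2*s^2 + 1677102657358095*x^3*s^2 + 251245503166185*x^4*s^2 + (-224040214897785)*x^5*s^2 + (-68935450737780)*x^6*s^2 + (-17233862684445)*x^7*s^2 + (-10731719732184)*s^3 + (-14308959642912)*x^1*s^3 + (-15501372946488)*x^2*s^3 + (-4177361983608)*x^3*s^3 + (-402691662648)*x^4*s^3 + 855531777672*x^5*s^3 + 263240546976*x^6*s^3 + 65810136744*x^7*s^3 := by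
  have hk := key9 (x-1) (s-3976993957/10^9) (by linarith) (by linarith) (by linarith) (by norm_num; linarith)
  have hEq : (2550048372545302743638322195364343571/62500000000000000000000000) + (11959969180079898128199159452565167229/25000000000000000000000000)*(x-1)^1 + (129814182900538115602830974102840778189/125000000000000000000000000)*(x-1)^2 + (13356773783088470605078780280913312543/12500000000000000000000000)*(x-1)^3 + (77209640649742089164431252473265847157/125000000000000000000000000)*(x-1)^4 + (13071854966149448985731102693047314621/62500000000000000000000000)*(x-1)^5 + (4958289814746342718725590676673119339/125000000000000000000000000)*(x-1)^6 + (450753619522394792611417334243010849/125000000000000000000000000)*(x-1)^7 + (4455660463005283574629955144514309/62500000000000000)*(s-3976993957/10^9)^1 + (2260792883242865817838173832398891/25000000000000000)*(x-1)^1*(s-3976993957/10^9)^1 + (4615787144464877755665512503936731/125000000000000000)*(x-1)^2*(s-3976993957/10^9)^1 + (-77227232923172822118793642486503/12500000000000000)*(x-1)^3*(s-3976993957/10^9)^1 + (-1283886519987942144200897581357197/125000000000000000)*(x-1)^4*(s-3976993957/10^9)^1 + (-256485824105663369683573633662741/62500000000000000)*(x-1)^5*(s-3976993957/10^9)^1 +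 (-97287726384906795397217585182419/125000000000000000)*(x-1)^6*(s-3976993957/10^9)^1 + (-8844338762264254127019780471129/125000000000000000)*(x-1)^7*(s-3976993957/10^9)^1 + (1041730244918503285024737/62500000)*(s-3976993957/10^9)^2 + (528845891320453804102863/25000000)*(x-1)^1*(s-3976993957/10^9)^2 + (1082436154732362712561983/125000000)*(x-1)^2*(s-3976993957/10^9)^2 + (-17711259451309699042779/12500000)*(x-1)^3*(s-3976993957/10^9)^2 + (-298168538190544992621321/125000000)*(x-1)^4*(s-3976993957/10^9)^2 + (-59626476368088105740913/62500000)*(x-1)^5*(s-3976993957/10^9)^2 + (-22616939312033419418967/125000000)*(x-1)^6*(s-3976993957/10^9)^2 + (-2056085392003038128997/125000000)*(x-1)^7*(s-3976993957/10^9)^2 + (-43937523506448)*(s-3976993957/10^9)^3 + (-53136785009880)*(x-1)^1*(s-3976993957/10^9)^3 + (-16563670020216)*(x-1)^2*(s-3976993957/10^9)^3 + 10335354868080*(x-1)^3*(s-3976993957/10^9)^3 + 10126930216392*(x-1)^4*(s-3976993957/10^9)^3 + 3816987931152*(x-1)^5*(s-3976993957/10^9)^3 + 723911504184*(x-1)^6*(s-3976993957/10^9)^3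 + 65810136744*(x-1)^7*(s-3976993957/10^9)^3 = (-4107910709229930) + (-5477214278973240)*x^1 + (-5933648802221010)*x^2 + (-1671885029292390)*x^3 + (-251297104982850)*x^4 + 222232203120330*x^5 + 68379139421640*x^6 + 17094784855410*x^7 + (-15192374380717644)*s^1 + (-20256499174290192)*x^1*s^1 + (-21944540772147708)*x^2*s^1 + (-6183361251653652)*x^3*s^1 + (-929634744822300)*x^4*s^1 + 821607424121484*x^5*s^1 + 252802284345072*x^6*s^1 + 63200571086268*x^7*s^1 + 4122466698415725*s^2 + 5496622264554300*x^1*s^2 + 5954674119933825*x^2*s^2 + 1677102657358095*x^3*s^2 + 251245503166185*x^4*s^2 + (-224040214897785)*x^5*s^2 + (-68935450737780)*x^6*s^2 + (-17233862684445)*x^7*s^2 + (-10731719732184)*s^3 + (-14308959642912)*x^1*s^3 + (-15501372946488)*x^2*s^3 + (-4177361983608)*x^3*s^3 + (-402691662648)*x^4*s^3 + 855531777672*x^5*s^3 + 263240546976*x^6*s^3 + 65810136744*x^7*s^3 := by ring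
  linarith [hk, hEq.ge, hEq.le]

set_option maxHeartbeats 4000000 in
private lemma neq9 (ξ x t : ℝ) (hξl : 3976993957/10^9 < ξ) (hξu : ξ < 3976993958/10^9)
    (hroot : -ξ ^ 4 + 2887 * ξ ^ 2 - 10692 * ξ - 2890 = 0)
    (hx1 : 1 < x) (hx3 : x < 3)
    (hcubic : t ^ 3 - 3 * x ^ 2 * t - (ξ ^ 2 - 1) / (2 * ξ) * (3 * x * t ^ 2 - x ^ 3) = -(ξ ^ 2 + 1) ^ 2 / (2 * ξ))
    (ht2 : t^2 = (3 * (972 - ξ ^ 2) / 26 * x ^ 2 + (3 * ξ ^ 2 - 3 * (972 - ξ ^ 2) / 26) / x) / 3) : False := by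
  have hx0 : x ≠ 0 := by linarith
  have hξ0 : ξ ≠ 0 := by norm_num at hξl ⊢; linarith
  have E2x : 3*x*t^2 = (3*(972-ξ^2)/26*x^3 + (3*ξ^2 - 3*(972-ξ^2)/26)) := by
    rw [ht2]; field_simp
  have E3 : t*((3*(972-ξ^2)/26*x^3 + (3*ξ^2 - 3*(972-ξ^2)/26)) - 9*x^3) = 3*x*(((ξ^2-1)/(2*ξ))*((3*(972-ξ^2)/26*x^3 + (3*ξ^2 - 3*(972-ξ^2)/26)) - x^3) + (-(ξ^2+1)^2/(2*ξ))) := by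
    linear_combination (3*x)*hcubic - (t - 3*((ξ^2-1)/(2*ξ))*x)*E2x
  have E4 : (3*(972-ξ^2)/26*x^3 + (3*ξ^2 - 3*(972-ξ^2)/26))*((3*(972-ξ^2)/26*x^3 + (3*ξ^2 - 3*(972-ξ^2)/26))-9*x^3)^2 = 27*x^3*(((ξ^2-1)/(2*ξ))*((3*(972-ξ^2)/26*x^3 + (3*ξ^2 - 3*(972-ξ^2)/26)) - x^3) + (-(ξ^2+1)^2/(2*ξ)))^2 := by
    linear_combination (3*x*(t*((3*(972-ξ^2)/26*x^3 + (3*ξ^2 - 3*(972-ξ^2)/26))-9*x^3) + 3*x*(((ξ^2-1)/(2*ξ))*((3*(972-ξ^2)/26*x^3 + (3*ξ^2 - 3*(972-ξ^2)/26)) - x^3) + (-(ξ^2+1)^2/(2*ξ)))))*E3 - ((3*(972-ξ^2)/26*x^3 + (3*ξ^2 - 3*(972-ξ^2)/26))-9*x^3)^2*E2x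
  have hc' : 2*ξ*((ξ^2-1)/(2*ξ)) = ξ^2-1 := by field_simp
  have hA' : 2*ξ*(-(ξ^2+1)^2/(2*ξ)) = -(ξ^2+1)^2 := by field_simp
  have hQ : 4*ξ^2*((3*(972-ξ^2)/26*x^3 + (3*ξ^2 - 3*(972-ξ^2)/26))*((3*(972-ξ^2)/26*x^3 + (3*ξ^2 - 3*(972-ξ^2)/26))-9*x^3)^2) = 27*x^3*((ξ^2-1)*((3*(972-ξ^2)/26*x^3 + (3*ξ^2 - 3*(972-ξ^2)/26))-x^3) - (ξ^2+1)^2)^2 := by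
    linear_combination 4*ξ^2*E4 + 27*x^3*((2*ξ*((ξ^2-1)/(2*ξ))*((3*(972-ξ^2)/26*x^3 + (3*ξ^2 - 3*(972-ξ^2)/26))-x^3) + 2*ξ*(-(ξ^2+1)^2/(2*ξ)))+((ξ^2-1)*((3*(972-ξ^2)/26*x^3 + (3*ξ^2 - 3*(972-ξ^2)/26))-x^3) - (ξ^2+1)^2))*(((3*(972-ξ^2)/26*x^3 + (3*ξ^2 - 3*(972-ξ^2)/26))-x^3)*hc' + hA')
  have hQR : (x-1)*(x-3)*((-4107910709229930) + (-5477214278973240)*x^1 + (-5933648802221010)*x^2 + (-1671885029292390)*x^3 + (-251297104982850)*x^4 + 222232203120330*x^5 + 68379139421640*x^6 + 17094784855410*x^7 + (-15192374380717644)*ξ^1 + (-20256499174290192)*x^1*ξ^1 + (-21944540772147708)*x^2*ξ^1 + (-6183361251653652)*x^3*ξ^1 + (-929634744822300)*x^4*ξ^1 + 821607424121484*x^5*ξ^1 + 252802284345072*x^6*ξ^1 + 63200571086268*x^7*ξ^1 + 4122466698415725*ξ^2 + 5496622264554300*x^1*ξ^2 + 5954674119933825*x^2*ξ^2 + 1677102657358095*x^3*ξ^2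 + 251245503166185*x^4*ξ^2 + (-224040214897785)*x^5*ξ^2 + (-68935450737780)*x^6*ξ^2 + (-17233862684445)*x^7*ξ^2 + (-10731719732184)*ξ^3 + (-14308959642912)*x^1*ξ^3 + (-15501372946488)*x^2*ξ^3 + (-4177361983608)*x^3*ξ^3 + (-402691662648)*x^4*ξ^3 + 855531777672*x^5*ξ^3 + 263240546976*x^6*ξ^3 + 65810136744*x^7*ξ^3) = 0 := by
    linear_combination 4394*hQ + (4264267172211 + (-4581912563262)*x^3 + 323561048715*x^6 + (-5915657664)*x^9 + (-5682167172)*ξ^1 + 6307601058*x^3*ξ^1 + (-642610584)*x^6*ξ^1 + 17176698*x^9*ξ^1 + 1476874539*ξ^2 + (-3171418245/2)*x^3*ξ^2 + 110351700*x^6*ξ^2 + (-3034233/2)*x^9*ξ^2 + 531441*ξ^4 + (-1179873/2)*x^3*ξ^4 + 60102*x^6*ξ^4 + (-3213/2)*x^9*ξ^4)*hroot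
  have hR := Rpos9 x ξ (by linarith) (by linarith) (by linarith) (by linarith)
  have h5 : 0 < (x-1)*((3-x)*((-4107910709229930) + (-5477214278973240)*x^1 + (-5933648802221010)*x^2 + (-1671885029292390)*x^3 + (-251297104982850)*x^4 + 222232203120330*x^5 + 68379139421640*x^6 + 17094784855410*x^7 + (-15192374380717644)*ξ^1 + (-20256499174290192)*x^1*ξ^1 + (-21944540772147708)*x^2*ξ^1 + (-6183361251653652)*x^3*ξ^1 + (-929634744822300)*x^4*ξ^1 + 821607424121484*x^5*ξ^1 + 252802284345072*x^6*ξ^1 + 63200571086268*x^7*ξ^1 + 4122466698415725*ξ^2 + 5496622264554300*x^1*ξ^2 + 5954674119933825*x^2*ξ^2 + 1677102657358095*x^3*ξ^2 + 251245503166185*x^4*ξ^2 + (-224040214897785)*x^5*ξ^2 + (-68935450737780)*x^6*ξ^2 + (-17233862684445)*x^7*ξ^2 + (-10731719732184)*ξ^3 + (-14308959642912)*x^1*ξ^3 + (-15501372946488)*x^2*ξ^3 + (-4177361983608)*x^3*ξ^3 + (-402691662648)*x^4*ξ^3 + 855531777672*x^5*ξ^3 + 263240546976*x^6*ξ^3 +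 65810136744*x^7*ξ^3)) := mul_pos (by linarith) (mul_pos (by linarith) hR)
  nlinarith [hQR, h5]

set_option maxHeartbeats 2000000 in
/-- For the blow-up of `CP³` with `p = 18`, `q = b = 3`: the explicit comparison
function `ψ^{(ξ)}(x) = √((μx² + λ/x)/3)` lies below the singular branch `ψ̃ = ψ̃_ξ`
of the cubic level set, and consequently so does the initial Calabi potential
`ψ₀(x) = √((μ₀x² + λ₀/x)/3)` with `μ₀ = 2889/26`, `λ₀ = 27 − μ₀`. -/
theorem stmt9 (ξ : ℝ) (hmem : ξ ∈ Set.Ioo (3:ℝ) 6)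
    (hroot : -ξ ^ 4 + 2887 * ξ ^ 2 - 10692 * ξ - 2890 = 0)
    (huniq : ∀ s ∈ Set.Ioo (3:ℝ) 6, -s ^ 4 + 2887 * s ^ 2 - 10692 * s - 2890 = 0 → s = ξ)
    (c A μ lam : ℝ)
    (hc : c = (ξ ^ 2 - 1) / (2 * ξ))
    (hA : A = -(ξ ^ 2 + 1) ^ 2 / (2 * ξ))
    (hμ : μ = 3 * (972 - ξ ^ 2) / 26)
    (hlam : lam = 3 * ξ ^ 2 - μ)
    (ψ ψ' : ℝ → ℝ)
    (hcont : ContinuousOn ψ (Set.Icc 1 3))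
    (hderiv : ∀ x ∈ Set.Ioo (1:ℝ) 3, HasDerivAt ψ (ψ' x) x)
    (h1 : ψ 1 = ξ) (h3 : ψ 3 = 18)
    (heq : ∀ x ∈ Set.Icc (1:ℝ) 3,
      (ψ x) ^ 3 - 3 * x ^ 2 * ψ x - c * (3 * x * (ψ x) ^ 2 - x ^ 3) = A)
    (htend : Filter.Tendsto ψ' (nhdsWithin 1 (Set.Ioi 1)) Filter.atTop) :
    (∀ x ∈ Set.Icc (1:ℝ) 3, Real.sqrt ((μ * x ^ 2 + lam / x) / 3) ≤ ψ x) ∧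
    (∀ x ∈ Set.Icc (1:ℝ) 3,
      Real.sqrt (((2889 / 26) * x ^ 2 + (27 - 2889 / 26) / x) / 3) ≤ ψ x) := by
  obtain ⟨hξ3, hξ6⟩ := hmem
  subst hc; subst hA; subst hlam; subst hμ
  have hξpos : (0:ℝ) < ξ := by linarith
  -- tight bounds on ξ from the quartic
  have hl : (3976993957/10^9 : ℝ) < ξ := by
    by_contra hcon
    push_neg at hcon
    have h4 : ξ < 4 := by
      have : (3976993957/10^9 : ℝ) < 4 := by norm_num
      linarith
    have hG : ξ^3 + ξ^2*(3976993957/10^9) + ξ*(3976993957/10^9)^2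
        + ((3976993957:ℝ)/10^9)^3 - 2887*(ξ + 3976993957/10^9) + 10692 < 0 := by
      nlinarith [sq_nonneg ξ, sq_nonneg (ξ-4), mul_pos hξpos hξpos]
    have hFl : (0:ℝ) < ((3976993957:ℝ)/10^9)^4 - 2887*((3976993957:ℝ)/10^9)^2
        + 10692*((3976993957:ℝ)/10^9) + 2890 := by norm_num
    have hprod : 0 ≤ (3976993957/10^9 - ξ) * (-(ξ^3 + ξ^2*(3976993957/10^9)
        + ξ*(3976993957/10^9)^2 + ((3976993957:ℝ)/10^9)^3 - 2887*(ξ + 3976993957/10^9) + 10692)) :=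
      mul_nonneg (by linarith) (by linarith)
    nlinarith [hprod, hFl, hroot]
  have hu : ξ < (3976993958/10^9 : ℝ) := by
    by_contra hcon
    push_neg at hcon
    have hG : ξ^3 + ξ^2*(3976993958/10^9) + ξ*(3976993958/10^9)^2
        + ((3976993958:ℝ)/10^9)^3 - 2887*(ξ + 3976993958/10^9) + 10692 < 0 := by
      nlinarith [sq_nonneg ξ, sq_nonneg (ξ-6), mul_pos hξpos hξpos]
    have hFu : ((3976993958:ℝ)/10^9)^4 - 2887*((3976993958:ℝ)/10^9)^2
        + 10692*((3976993958:ℝ)/10^9) + 2890 < 0 := by norm_num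
    have hprod : 0 ≤ (ξ - 3976993958/10^9) * (-(ξ^3 + ξ^2*(3976993958/10^9)
        + ξ*(3976993958/10^9)^2 + ((3976993958:ℝ)/10^9)^3 - 2887*(ξ + 3976993958/10^9) + 10692)) :=
      mul_nonneg (by linarith) (by linarith)
    nlinarith [hprod, hFu, hroot]
  -- nonnegativity of the radicand
  have hPnn : ∀ y : ℝ, 1 ≤ y →
      0 ≤ (3 * (972 - ξ ^ 2) / 26 * y ^ 2 + (3 * ξ ^ 2 - 3 * (972 - ξ ^ 2) / 26) / y) / 3 := by
    intro y hy
    have hy0 : (0:ℝ) < y := by linarith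
    have hrw : (3 * (972 - ξ ^ 2) / 26 * y ^ 2 + (3 * ξ ^ 2 - 3 * (972 - ξ ^ 2) / 26) / y) / 3
        = (3 * (972 - ξ ^ 2) / 26 * y ^ 3 + (3 * ξ ^ 2 - 3 * (972 - ξ ^ 2) / 26)) / (3 * y) := by
      field_simp
    rw [hrw]
    apply div_nonneg _ (by linarith)
    have h972 : (0:ℝ) ≤ 972 - ξ^2 := by nlinarith
    have hcube : (1:ℝ) ≤ y^3 := by nlinarith [sq_nonneg (y-1), sq_nonneg y]
    nlinarith [mul_nonneg h972 (by linarith : (0:ℝ) ≤ y^3 - 1), sq_nonneg ξ]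
  have hsqrtP : ∀ y : ℝ, 1 ≤ y →
      (Real.sqrt ((3 * (972 - ξ ^ 2) / 26 * y ^ 2 + (3 * ξ ^ 2 - 3 * (972 - ξ ^ 2) / 26) / y) / 3)) ^ 2
        = (3 * (972 - ξ ^ 2) / 26 * y ^ 2 + (3 * ξ ^ 2 - 3 * (972 - ξ ^ 2) / 26) / y) / 3 :=
    fun y hy => Real.sq_sqrt (hPnn y hy)
  -- continuity of the comparison function
  have hΦcont : ContinuousOn
      (fun y : ℝ => Real.sqrt ((3 * (972 - ξ ^ 2) / 26 * y ^ 2 + (3 * ξ ^ 2 - 3 * (972 - ξ ^ 2) / 26) / y) / 3))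
      (Set.Icc 1 3) := by
    apply Real.continuous_sqrt.comp_continuousOn
    apply ContinuousOn.div_const
    apply ContinuousOn.add (by fun_prop)
    exact continuousOn_const.div continuousOn_id
      (fun y hy => by have := hy.1; intro h; rw [h] at this; norm_num at this)
  -- the singular branch never meets the comparison function on (1,3)
  have hneq : ∀ y ∈ Set.Ioo (1:ℝ) 3,
      Real.sqrt ((3 * (972 - ξ ^ 2) / 26 * y ^ 2 + (3 * ξ ^ 2 - 3 * (972 - ξ ^ 2) / 26) / y) / 3) ≠ ψ y := by
    intro y hy hEq
    have ht2 : (ψ y) ^ 2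
        = (3 * (972 - ξ ^ 2) / 26 * y ^ 2 + (3 * ξ ^ 2 - 3 * (972 - ξ ^ 2) / 26) / y) / 3 := by
      rw [← hEq]; exact hsqrtP y hy.1.le
    exact neq9 ξ y (ψ y) hl hu hroot hy.1 hy.2 (heq y ⟨hy.1.le, hy.2.le⟩) ht2
  -- a point just right of 1 where ψ is strictly above
  have hev : ∀ᶠ z in nhdsWithin (1:ℝ) (Set.Ioi 1), (1000:ℝ) ≤ ψ' z :=
    htend.eventually (Filter.eventually_ge_atTop 1000)
  obtain ⟨w, hw, hsubw⟩ := mem_nhdsGT_iff_exists_Ioo_subset.mp hev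
  have hw1 : (1:ℝ) < w := hw
  set x₀ : ℝ := min ((1+w)/2) (3/2) with hx₀def
  have hx₀1 : 1 < x₀ := lt_min (by linarith) (by norm_num)
  have hx₀w : x₀ < w := lt_of_le_of_lt (min_le_left _ _) (by linarith)
  have hx₀32 : x₀ ≤ 3/2 := min_le_right _ _
  have hMVT : 1000*(x₀ - 1) ≤ ψ x₀ - ψ 1 := by
    have hcon : ContinuousOn ψ (Set.Icc 1 x₀) := hcont.mono (Set.Icc_subset_Icc le_rfl (by linarith))
    have hdiff : DifferentiableOn ℝ ψ (interior (Set.Icc (1:ℝ) x₀)) := by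
      rw [interior_Icc]
      intro z hz
      exact (hderiv z ⟨hz.1, by linarith [hz.2]⟩).differentiableAt.differentiableWithinAt
    have hge : ∀ z ∈ interior (Set.Icc (1:ℝ) x₀), 1000 ≤ deriv ψ z := by
      rw [interior_Icc]
      intro z hz
      rw [(hderiv z ⟨hz.1, by linarith [hz.2]⟩).deriv]
      exact hsubw ⟨hz.1, by linarith [hz.2]⟩
    exact (convex_Icc (1:ℝ) x₀).mul_sub_le_image_sub_of_le_deriv hcon hdiff hge
      1 (Set.left_mem_Icc.2 (by linarith)) x₀ (Set.right_mem_Icc.2 (by linarith)) (by linarith)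
  have hψx₀ : ξ + 1000*(x₀-1) ≤ ψ x₀ := by rw [h1] at hMVT; linarith
  have hPlt : (3 * (972 - ξ ^ 2) / 26 * x₀ ^ 2 + (3 * ξ ^ 2 - 3 * (972 - ξ ^ 2) / 26) / x₀) / 3
      < (ξ + 1000*(x₀-1))^2 := by
    have hx₀pos : (0:ℝ) < x₀ := by linarith
    have e2 : (3 * ξ ^ 2 - 3 * (972 - ξ ^ 2) / 26) / x₀
        = (3 * ξ ^ 2 - 3 * (972 - ξ ^ 2) / 26) + (-(3 * ξ ^ 2 - 3 * (972 - ξ ^ 2) / 26)) * (x₀-1) / x₀ := by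
      field_simp; ring
    have e1 : (-(3 * ξ ^ 2 - 3 * (972 - ξ ^ 2) / 26)) * (x₀-1) / x₀
        ≤ (-(3 * ξ ^ 2 - 3 * (972 - ξ ^ 2) / 26)) * (x₀-1) :=
      div_le_self (mul_nonneg (by nlinarith [hu, hξpos]) (by linarith)) (by linarith)
    nlinarith [e1, e2, hx₀1, hx₀32, hl, hu, mul_pos (sub_pos.2 hx₀1) (sub_pos.2 hx₀1)]
  have hΦx₀lt :
      Real.sqrt ((3 * (972 - ξ ^ 2) / 26 * x₀ ^ 2 + (3 * ξ ^ 2 - 3 * (972 - ξ ^ 2) / 26) / x₀) / 3)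
        < ψ x₀ :=
    lt_of_lt_of_le ((Real.sqrt_lt' (by nlinarith)).2 hPlt) hψx₀
  -- main comparison on the open interval
  have hstrict : ∀ y ∈ Set.Ioo (1:ℝ) 3,
      Real.sqrt ((3 * (972 - ξ ^ 2) / 26 * y ^ 2 + (3 * ξ ^ 2 - 3 * (972 - ξ ^ 2) / 26) / y) / 3) ≤ ψ y := by
    intro y hy
    by_contra hcon
    push_neg at hcon
    have hsub : Set.uIcc x₀ y ⊆ Set.Ioo (1:ℝ) 3 :=
      Set.OrdConnected.uIcc_subset Set.ordConnected_Ioo ⟨hx₀1, by linarith [hy.2]⟩ hy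
    have hgcont : ContinuousOn
        (fun z : ℝ => ψ z - Real.sqrt ((3 * (972 - ξ ^ 2) / 26 * z ^ 2 + (3 * ξ ^ 2 - 3 * (972 - ξ ^ 2) / 26) / z) / 3))
        (Set.uIcc x₀ y) :=
      (hcont.sub hΦcont).mono (hsub.trans Set.Ioo_subset_Icc_self)
    have h0mem : (0:ℝ) ∈ Set.uIcc
        (ψ x₀ - Real.sqrt ((3 * (972 - ξ ^ 2) / 26 * x₀ ^ 2 + (3 * ξ ^ 2 - 3 * (972 - ξ ^ 2) / 26) / x₀) / 3))
        (ψ y - Real.sqrt ((3 * (972 - ξ ^ 2) / 26 * y ^ 2 + (3 * ξ ^ 2 - 3 * (972 - ξ ^ 2) / 26) / y) / 3)) :=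
      Set.mem_uIcc.2 (Or.inr ⟨by linarith, by linarith⟩)
    obtain ⟨z, hzmem, hz0⟩ := intermediate_value_uIcc hgcont h0mem
    have hzIoo := hsub hzmem
    refine hneq z hzIoo ?_
    have : ψ z - Real.sqrt ((3 * (972 - ξ ^ 2) / 26 * z ^ 2 + (3 * ξ ^ 2 - 3 * (972 - ξ ^ 2) / 26) / z) / 3) = 0 := hz0
    linarith
  -- first conclusion
  have main1 : ∀ x ∈ Set.Icc (1:ℝ) 3,
      Real.sqrt ((3 * (972 - ξ ^ 2) / 26 * x ^ 2 + (3 * ξ ^ 2 - 3 * (972 - ξ ^ 2) / 26) / x) / 3) ≤ ψ x := by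
    intro x hx
    rcases eq_or_lt_of_le hx.1 with h|h
    · rw [← h]
      have hv : (3 * (972 - ξ ^ 2) / 26 * (1:ℝ) ^ 2 + (3 * ξ ^ 2 - 3 * (972 - ξ ^ 2) / 26) / 1) / 3 = ξ^2 := by
        ring
      rw [hv, Real.sqrt_sq (le_of_lt hξpos), h1]
    · rcases eq_or_lt_of_le hx.2 with h3'|h3'
      · rw [h3']
        have hv : (3 * (972 - ξ ^ 2) / 26 * (3:ℝ) ^ 2 + (3 * ξ ^ 2 - 3 * (972 - ξ ^ 2) / 26) / 3) / 3 = 18^2 := by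
          ring
        rw [hv, Real.sqrt_sq (by norm_num : (0:ℝ) ≤ 18), h3]
      · exact hstrict x ⟨h, h3'⟩
  refine ⟨main1, ?_⟩
  intro x hx
  refine le_trans (Real.sqrt_le_sqrt ?_) (main1 x hx)
  have hx0 : (0:ℝ) < x := by linarith [hx.1]
  have hdiff : (3 * (972 - ξ ^ 2) / 26 * x ^ 2 + (3 * ξ ^ 2 - 3 * (972 - ξ ^ 2) / 26) / x) / 3
      - ((2889 / 26) * x ^ 2 + (27 - 2889 / 26) / x) / 3 = (ξ^2-9)*(27-x^3)/(26*x) := by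
    field_simp; ring
  have hnn : 0 ≤ (ξ^2-9)*(27-x^3)/(26*x) :=
    div_nonneg (mul_nonneg (by nlinarith) (by nlinarith [hx.2])) (by linarith)
  linarith
end

section
/- The polynomial F(s) = −s⁴ + 2887s² − 10692s − 2890 has exactly one root ξ in the open interval (3,6). Moreover this root satisfies 2890 − 3ξ² > 0, (5346 − ξ³ + 3ξ)/(2890 − 3ξ²) = (ξ² − 1)/(2ξ), and (ξ² − 1)/(2ξ) > 5328/2863. Furthermore, with c := 5328/2863 one has c < 3 < c + √(c² + 1). -/
/-- Numerical facts for the blow-up of `CP³` with classes `α = 18[H] − 3[E]`,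
`β = 3[H] − [E]`: the quartic `F(s) = −s⁴ + 2887s² − 10692s − 2890` has exactly one
root `ξ` in `(3,6)`; this root satisfies `2890 − 3ξ² > 0` and
`(5346 − ξ³ + 3ξ)/(2890 − 3ξ²) = (ξ² − 1)/(2ξ) > 5328/2863`; and with
`c = 5328/2863` one has `c < 3 < c + √(c² + 1)`. -/
theorem stmt10 :
    (∃! ξ : ℝ, ξ ∈ Set.Ioo (3:ℝ) 6 ∧ -ξ ^ 4 + 2887 * ξ ^ 2 - 10692 * ξ - 2890 = 0) ∧
    (∀ ξ ∈ Set.Ioo (3:ℝ) 6, -ξ ^ 4 + 2887 * ξ ^ 2 - 10692 * ξ - 2890 = 0 →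
      0 < 2890 - 3 * ξ ^ 2 ∧
      (5346 - ξ ^ 3 + 3 * ξ) / (2890 - 3 * ξ ^ 2) = (ξ ^ 2 - 1) / (2 * ξ) ∧
      (5328 / 2863 : ℝ) < (ξ ^ 2 - 1) / (2 * ξ)) ∧
    ((5328 / 2863 : ℝ) < 3 ∧
      (3 : ℝ) < 5328 / 2863 + Real.sqrt ((5328 / 2863) ^ 2 + 1)) := by
  refine ⟨?_, ?_, ?_⟩
  · -- existence and uniqueness
    have hc : ContinuousOn (fun s : ℝ => -s ^ 4 + 2887 * s ^ 2 - 10692 * s - 2890)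
        (Set.Icc 3 6) := by fun_prop
    have hsub := intermediate_value_Ioo (by norm_num : (3:ℝ) ≤ 6) hc
    have h0 : (0:ℝ) ∈ Set.Ioo
        ((fun s : ℝ => -s ^ 4 + 2887 * s ^ 2 - 10692 * s - 2890) 3)
        ((fun s : ℝ => -s ^ 4 + 2887 * s ^ 2 - 10692 * s - 2890) 6) := by
      constructor <;> norm_num
    obtain ⟨ξ, hξ, hroot⟩ := hsub h0
    have hroot' : -ξ ^ 4 + 2887 * ξ ^ 2 - 10692 * ξ - 2890 = 0 := hroot
    refine ⟨ξ, ⟨hξ, hroot'⟩, ?_⟩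
    rintro y ⟨⟨hy3, hy6⟩, hy⟩
    obtain ⟨hξ3, hξ6⟩ := hξ
    have key : (y - ξ) * (-(y^3 + y^2*ξ + y*ξ^2 + ξ^3) + 2887*(y+ξ) - 10692) = 0 := by
      nlinarith [hy, hroot']
    have hpos : -(y^3 + y^2*ξ + y*ξ^2 + ξ^3) + 2887*(y+ξ) - 10692 > 0 := by
      nlinarith [mul_pos (sub_pos.mpr hy3) (sub_pos.mpr hξ3),
        mul_pos (sub_pos.mpr hy6) (sub_pos.mpr hξ6),
        mul_pos (mul_pos (sub_pos.mpr hy3) (sub_pos.mpr hξ3)) (sub_pos.mpr hξ3)]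
    have := mul_eq_zero.mp key
    rcases this with h | h
    · linarith [sub_eq_zero.mp h]
    · linarith
  · rintro ξ ⟨h3, h6⟩ hF
    have hden : 0 < 2890 - 3 * ξ ^ 2 := by nlinarith
    have hξpos : (0:ℝ) < 2 * ξ := by linarith
    refine ⟨hden, ?_, ?_⟩
    · rw [div_eq_div_iff (by linarith) (by linarith)]
      nlinarith [hF]
    · rw [lt_div_iff₀ hξpos]
      nlinarith [hF, sq_nonneg (ξ - 4), sq_nonneg (ξ - 3), sq_nonneg ξ,
        mul_pos (sub_pos.mpr h3) (sub_pos.mpr h3)]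
  · constructor
    · norm_num
    · have h1 : Real.sqrt ((5328 / 2863 : ℝ) ^ 2 + 1) > 3261 / 2863 := by
        rw [show (3261 / 2863 : ℝ) = Real.sqrt ((3261/2863)^2) from
          (Real.sqrt_sq (by norm_num)).symm]
        apply Real.sqrt_lt_sqrt (by positivity)
        norm_num
      linarith
end

section
/- Let ξ > 0 and set c := (ξ² − 1)/(2ξ) and A := −(ξ² + 1)²/(2ξ). For a real number x, set R₁ := −3(c² + 1)x² and R₂ := −2c(c² + 1)x³ − A. Then −(4R₁³ + 27R₂²) = 108(c² + 1)²·(x⁶ + (ξ² − 1)x³ − ξ²) = 108(c² + 1)²·(x³ − 1)(x³ + ξ²). In particular, −(4R₁³ + 27R₂²) > 0 for every x > 1 and −(4R₁³ + 27R₂²) = 0 at x = 1. -/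
/-- Discriminant of the depressed cubic `Ψ³ + R₁Ψ + R₂ = 0` arising from the level-set
equation on the blow-up of `CP³`: with `c = (ξ²−1)/(2ξ)`, `A = −(ξ²+1)²/(2ξ)`,
`R₁ = −3(c²+1)x²`, `R₂ = −2c(c²+1)x³ − A`, one has
`−(4R₁³ + 27R₂²) = 108(c²+1)²(x⁶ + (ξ²−1)x³ − ξ²) = 108(c²+1)²(x³−1)(x³+ξ²)`,
which is positive for `x > 1` and vanishes at `x = 1`. -/
theorem stmt16 (ξ : ℝ) (hξ : 0 < ξ) (x : ℝ) :
    let c := (ξ ^ 2 - 1) / (2 * ξ)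
    let A := -(ξ ^ 2 + 1) ^ 2 / (2 * ξ)
    let R₁ := -3 * (c ^ 2 + 1) * x ^ 2
    let R₂ := -2 * c * (c ^ 2 + 1) * x ^ 3 - A
    (-(4 * R₁ ^ 3 + 27 * R₂ ^ 2) =
        108 * (c ^ 2 + 1) ^ 2 * (x ^ 6 + (ξ ^ 2 - 1) * x ^ 3 - ξ ^ 2)) ∧
    (-(4 * R₁ ^ 3 + 27 * R₂ ^ 2) =
        108 * (c ^ 2 + 1) ^ 2 * (x ^ 3 - 1) * (x ^ 3 + ξ ^ 2)) ∧
    (1 < x → 0 < -(4 * R₁ ^ 3 + 27 * R₂ ^ 2)) ∧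
    (x = 1 → -(4 * R₁ ^ 3 + 27 * R₂ ^ 2) = 0) := by
  intro c A R₁ R₂
  have hξ0 : ξ ≠ 0 := ne_of_gt hξ
  have h1 : -(4 * R₁ ^ 3 + 27 * R₂ ^ 2) =
      108 * (c ^ 2 + 1) ^ 2 * (x ^ 6 + (ξ ^ 2 - 1) * x ^ 3 - ξ ^ 2) := by
    simp only [c, A, R₁, R₂]
    field_simp
    ring
  have h2 : -(4 * R₁ ^ 3 + 27 * R₂ ^ 2) =
      108 * (c ^ 2 + 1) ^ 2 * (x ^ 3 - 1) * (x ^ 3 + ξ ^ 2) := by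
    rw [h1]; ring
  refine ⟨h1, h2, ?_, ?_⟩
  · intro hx
    rw [h2]
    have hx3 : 1 < x ^ 3 := one_lt_pow₀ hx (by norm_num)
    have hc : 0 < c ^ 2 + 1 := by positivity
    have : 0 < x ^ 3 + ξ ^ 2 := by nlinarith
    exact mul_pos (mul_pos (by positivity) (by linarith : (0:ℝ) < x ^ 3 - 1)) this
  · intro hx
    rw [h2, hx]; ring
end

section
/- Let b > 1 and let q ≥ √(4b³ − 1), and set p := 3bq. Then 3(p²b − q²) > b³ − 1 (so the denominator below is positive), and q ≤ c_q, where c_q := (p³ − 3pb² − q³ + 3q)/(3p²b − b³ − 3q² + 1). In particular 0 < q ≤ c_q. -/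
/-- Second kind of dHYM unstability on the blow-up of `CP³`: for `p = 3bq` with
`q ≥ √(4b³ − 1)` one has `Im((p+ib)³) > Im((q+i)³)` and `0 < q ≤ c_q`. -/
theorem stmt17 (b q : ℝ) (hb : 1 < b) (hq : Real.sqrt (4 * b ^ 3 - 1) ≤ q) :
    b ^ 3 - 1 < 3 * ((3 * b * q) ^ 2 * b - q ^ 2) ∧
    q ≤ ((3 * b * q) ^ 3 - 3 * (3 * b * q) * b ^ 2 - q ^ 3 + 3 * q) /
        (3 * (3 * b * q) ^ 2 * b - b ^ 3 - 3 * q ^ 2 + 1) ∧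
    0 < q := by
  have hb3 : 1 < b ^ 3 := one_lt_pow₀ hb (by norm_num)
  have h0 : (0 : ℝ) ≤ 4 * b ^ 3 - 1 := by linarith
  have hs : (Real.sqrt (4 * b ^ 3 - 1)) ^ 2 = 4 * b ^ 3 - 1 := Real.sq_sqrt h0
  have hq2 : 4 * b ^ 3 - 1 ≤ q ^ 2 := by
    calc 4 * b ^ 3 - 1 = (Real.sqrt (4 * b ^ 3 - 1)) ^ 2 := hs.symm
      _ ≤ q ^ 2 := pow_le_pow_left₀ (Real.sqrt_nonneg _) hq 2
  have hqpos : 0 < q := lt_of_lt_of_le (Real.sqrt_pos.mpr (by linarith)) hq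
  have hD : 0 < 3 * (3 * b * q) ^ 2 * b - b ^ 3 - 3 * q ^ 2 + 1 := by nlinarith
  refine ⟨by nlinarith, ?_, hqpos⟩
  rw [le_div_iff₀ hD]
  nlinarith
end

section
/- Let b > 1 and set b_⋆ := √( (√(b³(17b³ − 1)) − b³ − 2)/(2(4b³ + 1)) ) and b^⋆ := √( 3(2b³ − 1)/(8b³ − 1) ). Let q > b_⋆ and set p := 2bq. Then 3(p²b − q²) > b³ − 1 (so the denominator below is positive), and with c_q := (p³ − 3pb² − q³ + 3q)/(3p²b − b³ − 3q² + 1) one has c_q < q < c_q + √(c_q² + 1). Moreover √((b³ − 1)/(3(4b³ − 1))) < b_⋆ < b^⋆ < 1, and c_q > 0 if q > b^⋆, c_q = 0 if q = b^⋆, and c_q < 0 if b_⋆ < q < b^⋆. -/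
set_option maxHeartbeats 1000000

/-- First kind of dHYM unstability on the blow-up of `CP³`: for `p = 2bq` with
`q > b_⋆` one has `Im((p+ib)³) > Im((q+i)³)` and `c_q < q < c_q + √(c_q² + 1)`;
moreover `√((b³−1)/(3(4b³−1))) < b_⋆ < b^⋆ < 1`, and the sign of `c_q` is determined
by the position of `q` relative to `b^⋆`. -/
theorem stmt18 (b q : ℝ) (hb : 1 < b)
    (hq : Real.sqrt ((Real.sqrt (b ^ 3 * (17 * b ^ 3 - 1)) - b ^ 3 - 2) /
        (2 * (4 * b ^ 3 + 1))) < q) :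
    b ^ 3 - 1 < 3 * ((2 * b * q) ^ 2 * b - q ^ 2) ∧
    (((2 * b * q) ^ 3 - 3 * (2 * b * q) * b ^ 2 - q ^ 3 + 3 * q) /
        (3 * (2 * b * q) ^ 2 * b - b ^ 3 - 3 * q ^ 2 + 1) < q ∧
      q < ((2 * b * q) ^ 3 - 3 * (2 * b * q) * b ^ 2 - q ^ 3 + 3 * q) /
            (3 * (2 * b * q) ^ 2 * b - b ^ 3 - 3 * q ^ 2 + 1) +
          Real.sqrt ((((2 * b * q) ^ 3 - 3 * (2 * b * q) * b ^ 2 - q ^ 3 + 3 * q) /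
            (3 * (2 * b * q) ^ 2 * b - b ^ 3 - 3 * q ^ 2 + 1)) ^ 2 + 1)) ∧
    (Real.sqrt ((b ^ 3 - 1) / (3 * (4 * b ^ 3 - 1))) <
        Real.sqrt ((Real.sqrt (b ^ 3 * (17 * b ^ 3 - 1)) - b ^ 3 - 2) /
          (2 * (4 * b ^ 3 + 1))) ∧
      Real.sqrt ((Real.sqrt (b ^ 3 * (17 * b ^ 3 - 1)) - b ^ 3 - 2) /
          (2 * (4 * b ^ 3 + 1))) < Real.sqrt (3 * (2 * b ^ 3 - 1) / (8 * b ^ 3 - 1)) ∧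
      Real.sqrt (3 * (2 * b ^ 3 - 1) / (8 * b ^ 3 - 1)) < 1) ∧
    (Real.sqrt (3 * (2 * b ^ 3 - 1) / (8 * b ^ 3 - 1)) < q →
      0 < ((2 * b * q) ^ 3 - 3 * (2 * b * q) * b ^ 2 - q ^ 3 + 3 * q) /
          (3 * (2 * b * q) ^ 2 * b - b ^ 3 - 3 * q ^ 2 + 1)) ∧
    (q = Real.sqrt (3 * (2 * b ^ 3 - 1) / (8 * b ^ 3 - 1)) →
      ((2 * b * q) ^ 3 - 3 * (2 * b * q) * b ^ 2 - q ^ 3 + 3 * q) /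
          (3 * (2 * b * q) ^ 2 * b - b ^ 3 - 3 * q ^ 2 + 1) = 0) ∧
    (q < Real.sqrt (3 * (2 * b ^ 3 - 1) / (8 * b ^ 3 - 1)) →
      ((2 * b * q) ^ 3 - 3 * (2 * b * q) * b ^ 2 - q ^ 3 + 3 * q) /
          (3 * (2 * b * q) ^ 2 * b - b ^ 3 - 3 * q ^ 2 + 1) < 0) := by
  have hb0 : 0 < b := lt_trans one_pos hb
  have hb3 : 1 < b ^ 3 := one_lt_pow₀ hb (by norm_num)
  set s := Real.sqrt (b ^ 3 * (17 * b ^ 3 - 1)) with hsdef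
  have hs2 : s ^ 2 = b ^ 3 * (17 * b ^ 3 - 1) := Real.sq_sqrt (by nlinarith)
  have hs0 : 0 ≤ s := Real.sqrt_nonneg _
  -- lower bound on s
  have hslb : 20 * b ^ 6 + 15 * b ^ 3 - 8 < 3 * (4 * b ^ 3 - 1) * s := by
    have h1 : (20 * b ^ 6 + 15 * b ^ 3 - 8) / (3 * (4 * b ^ 3 - 1)) < s := by
      rw [hsdef]
      apply Real.lt_sqrt_of_sq_lt
      rw [div_pow, div_lt_iff₀ (by nlinarith)]
      nlinarith [sq_nonneg (b ^ 3 - 1), sq_nonneg b, pow_pos hb0 3, pow_pos hb0 6]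
    rw [div_lt_iff₀ (by nlinarith)] at h1
    linarith
  -- upper bound on s
  have hsub : (8 * b ^ 3 - 1) * s < 56 * b ^ 6 + 3 * b ^ 3 - 8 := by
    have h1 : s < (56 * b ^ 6 + 3 * b ^ 3 - 8) / (8 * b ^ 3 - 1) := by
      rw [hsdef, Real.sqrt_lt' (by rw [lt_div_iff₀ (by nlinarith)]; nlinarith)]
      rw [div_pow, lt_div_iff₀ (by nlinarith)]
      nlinarith [sq_nonneg (b ^ 3 - 1), pow_pos hb0 3, pow_pos hb0 6]
    rw [lt_div_iff₀ (by nlinarith)] at h1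
    linarith
  set x := (s - b ^ 3 - 2) / (2 * (4 * b ^ 3 + 1)) with hxdef
  have hX : 2 * (4 * b ^ 3 + 1) * x = s - b ^ 3 - 2 := by
    rw [hxdef]; field_simp
  have hxgt : (b ^ 3 - 1) / (3 * (4 * b ^ 3 - 1)) < x := by
    rw [div_lt_iff₀ (by nlinarith), hxdef, div_mul_eq_mul_div, lt_div_iff₀ (by nlinarith)]
    nlinarith
  have hxpos : 0 < x :=
    lt_trans (div_pos (by nlinarith) (by nlinarith)) hxgt
  have hxlt : x < 3 * (2 * b ^ 3 - 1) / (8 * b ^ 3 - 1) := by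
    rw [hxdef, div_lt_div_iff₀ (by nlinarith) (by nlinarith)]
    nlinarith
  have hq0 : 0 < q := lt_of_le_of_lt (Real.sqrt_nonneg _) hq
  have hq2 : x < q ^ 2 := (Real.sqrt_lt' hq0).mp hq
  have hq2' : b ^ 3 - 1 < q ^ 2 * (3 * (4 * b ^ 3 - 1)) := by
    have h := lt_trans hxgt hq2
    rw [div_lt_iff₀ (by nlinarith)] at h
    exact h
  have hD : 0 < 3 * (2 * b * q) ^ 2 * b - b ^ 3 - 3 * q ^ 2 + 1 := by nlinarith
  set N := (2 * b * q) ^ 3 - 3 * (2 * b * q) * b ^ 2 - q ^ 3 + 3 * q with hNdef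
  set D := 3 * (2 * b * q) ^ 2 * b - b ^ 3 - 3 * q ^ 2 + 1 with hDdef
  have hNeq : N = q * ((8 * b ^ 3 - 1) * q ^ 2 - 3 * (2 * b ^ 3 - 1)) := by
    rw [hNdef]; ring
  have hDeq : D = 3 * (4 * b ^ 3 - 1) * q ^ 2 - (b ^ 3 - 1) := by
    rw [hDdef]; ring
  have hcq : N / D < q := by
    rw [div_lt_iff₀ hD]
    have h1 : 0 < q * ((4 * b ^ 3 - 2) * q ^ 2 + 5 * b ^ 3 - 2) := by
      apply mul_pos hq0; nlinarith [sq_nonneg q]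
    nlinarith [h1]
  refine ⟨by nlinarith [hD], ⟨hcq, ?_⟩, ⟨?_, ?_, ?_⟩, ?_, ?_, ?_⟩
  · -- q < c + sqrt(c^2+1)
    have hE : 0 < (4 * b ^ 3 + 1) * q ^ 4 + (b ^ 3 + 2) * q ^ 2 - (b ^ 3 - 1) := by
      have hXsq : (2 * (4 * b ^ 3 + 1) * x) ^ 2 = (s - b ^ 3 - 2) ^ 2 := by rw [hX]
      have hmul : 0 < (q ^ 2 - x) * ((4 * b ^ 3 + 1) * (q ^ 2 + x) + b ^ 3 + 2) := by
        apply mul_pos (by linarith) (by nlinarith)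
      nlinarith [hXsq, hX, hs2, hmul]
    have h2 : q ^ 2 - 1 < 2 * q * (N / D) := by
      rw [show 2 * q * (N / D) = 2 * q * N / D by ring, lt_div_iff₀ hD]
      nlinarith [hE]
    have hkey : (q - N / D) ^ 2 < (N / D) ^ 2 + 1 := by
      have hexp : (q - N / D) ^ 2 = q ^ 2 - 2 * q * (N / D) + (N / D) ^ 2 := by ring
      rw [hexp]; linarith
    have h3 : q - N / D < Real.sqrt ((N / D) ^ 2 + 1) := Real.lt_sqrt_of_sq_lt hkey
    linarith
  · exact Real.sqrt_lt_sqrt (div_nonneg (by nlinarith) (by nlinarith)) hxgt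
  · exact Real.sqrt_lt_sqrt hxpos.le hxlt
  · rw [Real.sqrt_lt' one_pos, div_lt_iff₀ (by nlinarith)]; nlinarith
  · intro hgt
    have hB : 3 * (2 * b ^ 3 - 1) / (8 * b ^ 3 - 1) < q ^ 2 := (Real.sqrt_lt' hq0).mp hgt
    rw [div_lt_iff₀ (by nlinarith)] at hB
    apply div_pos _ hD
    rw [hNeq]; apply mul_pos hq0; nlinarith
  · intro heq
    have hBnn : (0:ℝ) ≤ 3 * (2 * b ^ 3 - 1) / (8 * b ^ 3 - 1) := by
      apply div_nonneg (by nlinarith) (by nlinarith)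
    have hq2eq : q ^ 2 = 3 * (2 * b ^ 3 - 1) / (8 * b ^ 3 - 1) := by
      rw [heq, Real.sq_sqrt hBnn]
    rw [eq_div_iff (by nlinarith)] at hq2eq
    have hN0 : N = 0 := by rw [hNeq]; nlinarith [hq2eq]
    rw [hN0, zero_div]
  · intro hlt
    have hB : q ^ 2 < 3 * (2 * b ^ 3 - 1) / (8 * b ^ 3 - 1) := (Real.lt_sqrt hq0.le).mp hlt
    rw [lt_div_iff₀ (by nlinarith)] at hB
    apply div_neg_of_neg_of_pos _ hD
    rw [hNeq]
    apply mul_neg_of_pos_of_neg hq0; nlinarith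
end
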